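/- arXiv:2410.18992 — 3 statements merged into one kernel-verified Lean document; each statement's English description precedes it below -/
import Mathlib

section
/- Let k be an algebraically closed field with char k ≠ 2 and n ≥ 1 a natural number. Let d₀, d₁, d₂ be natural numbers with d₁ ≤ n·d₀, n·d₂ ≤ (n²−1)·d₁, n·d₂ < d₁, and d₀ + d₂ ≤ n·d₁. Then the minimum, over all stratum data (A,C) of type (d₀,d₁,d₂), of Module.finrank k (⨅_{(i,j) : Fin n × Fin n} LinearMap.ker (Matrix.mulVecLin (A i * C j))) equals d₀ − (n²−1)·d₂ (truncated natural-number subtraction, i.e. max(d₀ − (n²−1)·d₂, 0) over the integers). -/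
open Matrix LinearMap Module

section helpers

variable {k : Type*} [Field k]

private lemma my_sum_mulVec {m q : ℕ} {ι : Type*} [DecidableEq ι] (s : Finset ι)
    (M : ι → Matrix (Fin m) (Fin q) k) (z : Fin q → k) :
    (∑ i ∈ s, M i).mulVec z = ∑ i ∈ s, (M i).mulVec z := by
  induction s using Finset.induction_on with
  | empty => simp [Matrix.zero_mulVec]
  | @insert a S ha ih =>
    rw [Finset.sum_insert ha, Finset.sum_insert ha, Matrix.add_mulVec, ih]

private lemma finrank_inf_bound {V : Type*} [AddCommGroup V] [Module k V]
    [FiniteDimensional k V] {ι : Type*} [DecidableEq ι] (W : ι → Submodule k V) (c : ℕ)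
    (h : ∀ i, Module.finrank k V ≤ Module.finrank k (W i) + c) (S : Finset ι) :
    Module.finrank k V ≤ Module.finrank k ↥(S.inf W) + S.card * c := by
  induction S using Finset.induction_on with
  | empty =>
    simp [finrank_top]
    exact le_of_eq (finrank_top k V).symm
  | @insert a S ha ih =>
    rw [Finset.inf_insert, Finset.card_insert_of_notMem ha]
    have h1 := Submodule.finrank_sup_add_finrank_inf_eq (W a) (S.inf W)
    have h2 : Module.finrank k ↥(W a ⊔ S.inf W) ≤ Module.finrank k V :=
      Submodule.finrank_le _
    have h3 := h a
    nlinarith [ih]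

/-- lower bound part -/
private lemma lower_bound {n d₀ d₁ d₂ : ℕ} (hn : 1 ≤ n)
    (A : Fin n → Matrix (Fin d₂) (Fin d₁) k)
    (C : Fin n → Matrix (Fin d₁) (Fin d₀) k)
    (hsum : (∑ i, A i * C i) = 0) :
    d₀ - (n * n - 1) * d₂ ≤
      Module.finrank k
        ↥(⨅ p : Fin n × Fin n, LinearMap.ker (Matrix.mulVecLin (A p.1 * C p.2))) := by
  classical
  set ln : Fin n := ⟨n - 1, by omega⟩ with hln
  set pn : Fin n × Fin n := (ln, ln) with hpn
  have hWb : ∀ p : Fin n × Fin n, Module.finrank k (Fin d₀ → k) ≤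
      Module.finrank k ↥(LinearMap.ker (Matrix.mulVecLin (A p.1 * C p.2))) + d₂ := by
    intro p
    have h5 := LinearMap.finrank_range_add_finrank_ker (Matrix.mulVecLin (A p.1 * C p.2))
    have h6 : Module.finrank k ↥(LinearMap.range (Matrix.mulVecLin (A p.1 * C p.2))) ≤ d₂ := by
      have := Submodule.finrank_le (LinearMap.range (Matrix.mulVecLin (A p.1 * C p.2)))
      simpa [Module.finrank_fin_fun] using this
    omega
  have hbound := finrank_inf_bound
    (fun p : Fin n × Fin n => LinearMap.ker (Matrix.mulVecLin (A p.1 * C p.2))) d₂ hWb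
    (Finset.univ.erase pn)
  have hcard : (Finset.univ.erase pn).card = n * n - 1 := by
    rw [Finset.card_erase_of_mem (Finset.mem_univ _), Finset.card_univ]
    simp
  have hEq : (Finset.univ.erase pn).inf
      (fun p : Fin n × Fin n => LinearMap.ker (Matrix.mulVecLin (A p.1 * C p.2))) =
      ⨅ p : Fin n × Fin n, LinearMap.ker (Matrix.mulVecLin (A p.1 * C p.2)) := by
    apply le_antisymm
    · apply le_iInf
      intro p
      by_cases hp : p = pn
      · subst hp
        intro z hz
        have hz' : ∀ q : Fin n × Fin n, q ≠ pn →
            z ∈ LinearMap.ker (Matrix.mulVecLin (A q.1 * C q.2)) := by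
          intro q hq
          exact Finset.inf_le (f := fun p : Fin n × Fin n => LinearMap.ker (Matrix.mulVecLin (A p.1 * C p.2))) (Finset.mem_erase.mpr ⟨hq, Finset.mem_univ _⟩) hz
        have hzz : ∀ i : Fin n, i ≠ ln → (A i * C i).mulVec z = 0 := by
          intro i hi
          have := hz' (i, i) (by simp [hpn, hi])
          simpa [LinearMap.mem_ker, Matrix.mulVecLin_apply] using this
        have hsplit := Finset.sum_erase_add Finset.univ (fun i => (A i * C i).mulVec z)
          (Finset.mem_univ ln)
        have hzero : (∑ i, (A i * C i).mulVec z) = 0 := by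
          rw [← my_sum_mulVec, hsum, Matrix.zero_mulVec]
        have hzero2 : (∑ i ∈ Finset.univ.erase ln, (A i * C i).mulVec z) = 0 := by
          apply Finset.sum_eq_zero
          intro i hi
          exact hzz i (Finset.mem_erase.mp hi).1
        have hfin : (A ln * C ln).mulVec z = 0 := by
          rw [hzero2, hzero] at hsplit; simpa using hsplit
        simpa [hpn, LinearMap.mem_ker, Matrix.mulVecLin_apply] using hfin
      · exact Finset.inf_le (Finset.mem_erase.mpr ⟨hp, Finset.mem_univ _⟩)
    · exact Finset.le_inf fun p _ => iInf_le _ p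
  rw [hcard, hEq, Module.finrank_fin_fun] at hbound
  omega

end helpers

section certificates

variable {k : Type*} [Field k]

/-- If selecting suitable columns from the family `Cfam` yields an invertible square
matrix, then the ranges of the `Cfam j` span everything. -/
private lemma sup_range_eq_top_of_det {m p q : ℕ} (Cfam : Fin m → Matrix (Fin p) (Fin q) k)
    (ρ : Fin p → Fin m × Fin q)
    (hN : (Matrix.of fun b b' => Cfam (ρ b').1 b (ρ b').2).det ≠ 0) :
    (⨆ j, LinearMap.range (Matrix.mulVecLin (Cfam j))) = ⊤ := by
  classical
  set N : Matrix (Fin p) (Fin p) k := Matrix.of fun b b' => Cfam (ρ b').1 b (ρ b').2 with hNdef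
  have hunit : IsUnit N.det := hN.isUnit
  rw [eq_top_iff]
  intro y _
  have hy : y = N.mulVec (N⁻¹.mulVec y) := by
    rw [Matrix.mulVec_mulVec, Matrix.mul_nonsing_inv _ hunit, Matrix.one_mulVec]
  have hcol : ∀ w : Fin p → k,
      N.mulVec w = ∑ b', w b' • (Cfam (ρ b').1).mulVec (Pi.single (ρ b').2 1) := by
    intro w
    funext b
    simp only [Matrix.mulVec, dotProduct, Finset.sum_apply, Pi.smul_apply,
      smul_eq_mul, Matrix.mulVec_single, mul_one, hNdef, Matrix.of_apply, MulOpposite.op_one,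
      one_smul, Matrix.col_apply]
    exact Finset.sum_congr rfl fun b' _ => mul_comm _ _
  rw [hy, hcol]
  apply Submodule.sum_mem
  intro b' _
  apply Submodule.smul_mem
  have hmem : (Cfam (ρ b').1).mulVec (Pi.single (ρ b').2 1) ∈
      LinearMap.range (Matrix.mulVecLin (Cfam (ρ b').1)) :=
    ⟨Pi.single (ρ b').2 1, rfl⟩
  exact le_iSup (fun j => LinearMap.range (Matrix.mulVecLin (Cfam j))) (ρ b').1 hmem

/-- If a suitable `r × r` minor of the stacked family is invertible, the common kernel
has dimension at most `q - r`. -/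
private lemma finrank_iInf_ker_le {ι : Type*} [Fintype ι] {d q r : ℕ}
    (Mfam : ι → Matrix (Fin d) (Fin q) k)
    (sel : Fin r → ι × Fin d) (cols : Fin r → Fin q)
    (hdet : (Matrix.of fun s s' => Mfam (sel s).1 (sel s).2 (cols s')).det ≠ 0) :
    Module.finrank k ↥(⨅ i, LinearMap.ker (Matrix.mulVecLin (Mfam i))) ≤ q - r := by
  classical
  set Msel : Matrix (Fin r) (Fin q) k := Matrix.of fun s c => Mfam (sel s).1 (sel s).2 c
    with hMsel
  have hle : (⨅ i, LinearMap.ker (Matrix.mulVecLin (Mfam i))) ≤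
      LinearMap.ker (Matrix.mulVecLin Msel) := by
    intro z hz
    simp only [Submodule.mem_iInf] at hz
    simp only [LinearMap.mem_ker, Matrix.mulVecLin_apply]
    funext s
    have := hz (sel s).1
    simp only [LinearMap.mem_ker, Matrix.mulVecLin_apply] at this
    calc (Msel.mulVec z) s = ((Mfam (sel s).1).mulVec z) (sel s).2 := by
          simp [hMsel, Matrix.mulVec, dotProduct]
      _ = 0 := by rw [this]; rfl
  have hrank : r ≤ Msel.rank := by
    set U : Matrix (Fin q) (Fin r) k := Matrix.of fun c s' => if c = cols s' then 1 else 0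
      with hU
    have hprod : Msel * U = Matrix.of fun s s' => Mfam (sel s).1 (sel s).2 (cols s') := by
      ext s s'
      simp [Matrix.mul_apply, hU, hMsel]
    have h1 : (Msel * U).rank = r := by
      rw [hprod]
      have := Matrix.rank_of_isUnit (Matrix.of fun s s' => Mfam (sel s).1 (sel s).2 (cols s'))
        ((Matrix.isUnit_iff_isUnit_det _).mpr hdet.isUnit)
      simpa using this
    calc r = (Msel * U).rank := h1.symm
      _ ≤ Msel.rank := Matrix.rank_mul_le_left _ _
  have hrn := LinearMap.finrank_range_add_finrank_ker (Matrix.mulVecLin Msel)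
  rw [Module.finrank_fin_fun] at hrn
  have hmono := Submodule.finrank_mono hle
  have : Matrix.rank Msel = Module.finrank k ↥(LinearMap.range (Matrix.mulVecLin Msel)) := rfl
  omega

end certificates

section construction

variable {k : Type*} [Field k]

private def x0p (n d₂ d₀ ii jj aa cc : ℕ) : k :=
  if cc = ((ii * n + jj) * d₂ + aa) % d₀ then 1 else 0

private def x0 (n d₂ d₀ ii jj aa cc : ℕ) : k :=
  if ii = n - 1 ∧ jj = n - 1 then
    -(∑ i' ∈ Finset.range (n - 1), x0p n d₂ d₀ i' i' aa cc)
  else x0p n d₂ d₀ ii jj aa cc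

private def x1 (n ii jj aa cc : ℕ) : k :=
  if jj = (ii + 1) % n ∧ cc = aa then 1 else 0

private def xm (t : k) (n d₂ d₀ ii jj aa cc : ℕ) : k :=
  x0 n d₂ d₀ ii jj aa cc * (1 - t) + x1 n ii jj aa cc * t

private def dent (d₀ d₂ jj c' cc : ℕ) : k :=
  if jj = c' / (d₀ - d₂) ∧ cc = d₂ + c' % (d₀ - d₂) then 1 else 0

private def cent (t : k) (n d₀ d₂ jj bb cc : ℕ) : k :=
  if bb < n * d₂ then xm t n d₂ d₀ (bb / d₂) jj (bb % d₂) cc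
  else dent d₀ d₂ jj (bb - n * d₂) cc * t

private def amat (n d₁ d₂ : ℕ) (i : Fin n) : Matrix (Fin d₂) (Fin d₁) k :=
  Matrix.of fun a b => if (b : ℕ) = (i : ℕ) * d₂ + (a : ℕ) then 1 else 0

private def cmat (t : k) (n d₀ d₁ d₂ : ℕ) (j : Fin n) : Matrix (Fin d₁) (Fin d₀) k :=
  Matrix.of fun b c => cent t n d₀ d₂ (j : ℕ) (b : ℕ) (c : ℕ)

private lemma amat_mul_cmat (t : k) {n d₀ d₁ d₂ : ℕ} (hd₂ : 0 < d₂) (hnd : n * d₂ ≤ d₁)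
    (i j : Fin n) :
    amat n d₁ d₂ i * cmat t n d₀ d₁ d₂ j =
      Matrix.of (fun (a : Fin d₂) (c : Fin d₀) =>
        xm t n d₂ d₀ (i : ℕ) (j : ℕ) (a : ℕ) (c : ℕ)) := by
  refine Matrix.ext fun a c => ?_
  have hlt : (i : ℕ) * d₂ + (a : ℕ) < n * d₂ := by
    have h1 : (i : ℕ) + 1 ≤ n := i.2
    have h2 : (i : ℕ) * d₂ + (a : ℕ) < ((i : ℕ) + 1) * d₂ := by
      have := a.2; nlinarith
    exact lt_of_lt_of_le h2 (Nat.mul_le_mul_right _ h1)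
  have hb : (i : ℕ) * d₂ + (a : ℕ) < d₁ := lt_of_lt_of_le hlt hnd
  erw [Matrix.mul_apply]
  rw [Finset.sum_eq_single (⟨(i : ℕ) * d₂ + (a : ℕ), hb⟩ : Fin d₁)]
  · simp only [amat, cmat, Matrix.of_apply]
    simp only [if_true, one_mul, cent]
    rw [if_pos hlt]
    have e1 : ((i : ℕ) * d₂ + (a : ℕ)) / d₂ = (i : ℕ) := by
      rw [mul_comm (i : ℕ) d₂, Nat.mul_add_div hd₂, Nat.div_eq_of_lt a.2, add_zero]
    have e2 : ((i : ℕ) * d₂ + (a : ℕ)) % d₂ = (a : ℕ) := by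
      rw [mul_comm (i : ℕ) d₂, Nat.mul_add_mod, Nat.mod_eq_of_lt a.2]
    rw [e1, e2]
  · intro b _ hbne
    simp only [amat, Matrix.of_apply]
    rw [if_neg, zero_mul]
    intro hcontra
    exact hbne (Fin.ext hcontra)
  · intro hmem
    exact absurd (Finset.mem_univ _) hmem

private lemma x1_diag {n : ℕ} (hn : 2 ≤ n) (ii aa cc : ℕ) (hii : ii < n) :
    (x1 n ii ii aa cc : k) = 0 := by
  rw [x1, if_neg]
  rintro ⟨h, -⟩
  by_cases h2 : ii + 1 < n
  · rw [Nat.mod_eq_of_lt h2] at h; omega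
  · have h3 : ii + 1 = n := by omega
    rw [h3, Nat.mod_self] at h
    omega

private lemma x0_diag_sum {n d₂ d₀ : ℕ} (hn : 1 ≤ n) (aa cc : ℕ) :
    (∑ i : Fin n, (x0 n d₂ d₀ (i : ℕ) (i : ℕ) aa cc : k)) = 0 := by
  rw [Fin.sum_univ_eq_sum_range (fun ii => (x0 n d₂ d₀ ii ii aa cc : k)) n]
  obtain ⟨m, rfl⟩ : ∃ m, n = m + 1 := ⟨n - 1, by omega⟩
  rw [Finset.sum_range_succ]
  have hlast : (x0 (m + 1) d₂ d₀ m m aa cc : k) =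
      -(∑ i' ∈ Finset.range m, x0p (m + 1) d₂ d₀ i' i' aa cc) := by
    rw [x0, if_pos]
    · simp
    · simp
  have hplain : ∀ ii ∈ Finset.range m,
      (x0 (m + 1) d₂ d₀ ii ii aa cc : k) = x0p (m + 1) d₂ d₀ ii ii aa cc := by
    intro ii hii
    rw [Finset.mem_range] at hii
    rw [x0, if_neg]
    simp only [Nat.add_sub_cancel]
    rintro ⟨h, -⟩
    omega
  rw [Finset.sum_congr rfl hplain, hlast]
  simp

private lemma sum_amat_cmat (t : k) {n d₀ d₁ d₂ : ℕ} (hn : 2 ≤ n) (hd₂ : 0 < d₂)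
    (hnd : n * d₂ ≤ d₁) :
    (∑ i, amat (k := k) n d₁ d₂ i * cmat t n d₀ d₁ d₂ i) = 0 := by
  rw [show (∑ i, amat (k := k) n d₁ d₂ i * cmat t n d₀ d₁ d₂ i) = ∑ i : Fin n,
      Matrix.of (fun (a : Fin d₂) (c : Fin d₀) => xm t n d₂ d₀ (i : ℕ) (i : ℕ) (a : ℕ) (c : ℕ))
    from Finset.sum_congr rfl (fun i _ => amat_mul_cmat t hd₂ hnd i i)]
  refine Matrix.ext fun a c => ?_
  rw [Matrix.sum_apply]
  simp only [Matrix.of_apply, xm]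
  rw [Finset.sum_add_distrib, ← Finset.sum_mul, ← Finset.sum_mul,
    x0_diag_sum (by omega) (a : ℕ) (c : ℕ),
    Finset.sum_eq_zero (fun (i : Fin n) _ => x1_diag hn (i : ℕ) (a : ℕ) (c : ℕ) i.isLt)]
  simp

end construction

section moreconstruction

variable {k : Type*} [Field k]

private lemma amat_sup_range {n d₁ d₂ : ℕ} (hn : 0 < n) (hd : d₂ ≤ d₁) :
    (⨆ i, LinearMap.range (Matrix.mulVecLin (amat (k := k) n d₁ d₂ i))) = ⊤ := by
  apply sup_range_eq_top_of_det (amat n d₁ d₂)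
    (fun a => (⟨0, hn⟩, ⟨(a : ℕ), lt_of_lt_of_le a.2 hd⟩))
  have hEq : (Matrix.of fun (a a' : Fin d₂) =>
      amat (k := k) n d₁ d₂ (⟨0, hn⟩ : Fin n) a (⟨(a' : ℕ), lt_of_lt_of_le a'.2 hd⟩ : Fin d₁)) =
      (1 : Matrix (Fin d₂) (Fin d₂) k) := by
    ext a a'
    rw [Matrix.one_apply]
    show (if ((a' : ℕ)) = 0 * d₂ + (a : ℕ) then (1 : k) else 0) = _
    rw [zero_mul, zero_add]
    by_cases h : a = a'
    · rw [if_pos (by rw [h]), if_pos h]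
    · rw [if_neg (fun hc => h (Fin.ext hc.symm)), if_neg h]
  rw [hEq, Matrix.det_one]
  exact one_ne_zero

private def c0mat (n d₀ d₁ : ℕ) (j : Fin n) : Matrix (Fin d₁) (Fin d₀) k :=
  Matrix.of fun b c => if (j : ℕ) = (b : ℕ) / d₀ ∧ (c : ℕ) = (b : ℕ) % d₀ then 1 else 0

private lemma c0mat_sup_range {n d₀ d₁ : ℕ} (hd₀ : 0 < d₀) (h1 : d₁ ≤ n * d₀) :
    (⨆ j, LinearMap.range (Matrix.mulVecLin (c0mat (k := k) n d₀ d₁ j))) = ⊤ := by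
  apply sup_range_eq_top_of_det (c0mat n d₀ d₁)
    (fun b => (⟨(b : ℕ) / d₀, (Nat.div_lt_iff_lt_mul hd₀).mpr (lt_of_lt_of_le b.2 h1)⟩,
      ⟨(b : ℕ) % d₀, Nat.mod_lt _ hd₀⟩))
  have hEq : (Matrix.of fun (b b' : Fin d₁) =>
      c0mat (k := k) n d₀ d₁
        (⟨(b' : ℕ) / d₀, (Nat.div_lt_iff_lt_mul hd₀).mpr (lt_of_lt_of_le b'.2 h1)⟩ : Fin n) b
        (⟨(b' : ℕ) % d₀, Nat.mod_lt _ hd₀⟩ : Fin d₀)) = (1 : Matrix (Fin d₁) (Fin d₁) k) := by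
    ext b b'
    simp only [Matrix.of_apply, c0mat, Matrix.one_apply, Fin.val_mk]
    by_cases h : b = b'
    · subst h; simp
    · rw [if_neg, if_neg h]
      rintro ⟨hA, hB⟩
      apply h
      apply Fin.ext
      have e := Nat.div_add_mod (b : ℕ) d₀
      have e' := Nat.div_add_mod (b' : ℕ) d₀
      rw [hA, hB] at e'
      omega
  rw [hEq, Matrix.det_one]
  exact one_ne_zero

private lemma x0_entry {n d₂ d₀ r : ℕ} (hn : 2 ≤ n) (hd₂ : 0 < d₂) (hrd₀ : r ≤ d₀)
    (hrd₂ : r ≤ (n * n - 1) * d₂) (s s' : ℕ) (hs : s < r) :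
    (x0 n d₂ d₀ (s / d₂ / n) ((s / d₂) % n) (s % d₂) s' : k) = if s' = s then 1 else 0 := by
  have e1 : (s / d₂ / n) * n + (s / d₂) % n = s / d₂ := by
    rw [mul_comm]; exact Nat.div_add_mod _ n
  have e2 : (s / d₂) * d₂ + s % d₂ = s := by
    rw [mul_comm]; exact Nat.div_add_mod s d₂
  have hP : s / d₂ < n * n - 1 := (Nat.div_lt_iff_lt_mul hd₂).mpr (lt_of_lt_of_le hs hrd₂)
  have hnl : ¬(s / d₂ / n = n - 1 ∧ (s / d₂) % n = n - 1) := by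
    rintro ⟨hA, hB⟩
    rw [hA, hB] at e1
    have hval : (n - 1) * n + (n - 1) = n * n - 1 := by
      obtain ⟨m, rfl⟩ : ∃ m, n = m + 2 := ⟨n - 2, by omega⟩
      show (m + 1) * (m + 2) + (m + 1) = (m + 2) * (m + 2) - 1
      have : (m + 1) * (m + 2) + (m + 1) + 1 = (m + 2) * (m + 2) := by ring
      omega
    omega
  rw [x0, if_neg hnl, x0p, e1, e2, Nat.mod_eq_of_lt (lt_of_lt_of_le hs hrd₀)]

private lemma head_head {n d₂ : ℕ} (hd₂ : 0 < d₂) (b b' : ℕ) (hb : b < n * d₂)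
    (hb' : b' < n * d₂) :
    (x1 n (b / d₂) ((b' / d₂ + 1) % n) (b % d₂) (b' % d₂) : k) = if b = b' then 1 else 0 := by
  have hq : b / d₂ < n := (Nat.div_lt_iff_lt_mul hd₂).mpr (by omega)
  have hq' : b' / d₂ < n := (Nat.div_lt_iff_lt_mul hd₂).mpr (by omega)
  by_cases hbb : b = b'
  · subst hbb; rw [x1, if_pos ⟨rfl, rfl⟩, if_pos rfl]
  · rw [x1, if_neg, if_neg hbb]
    rintro ⟨hA, hB⟩
    apply hbb
    have e := Nat.div_add_mod b d₂
    have e' := Nat.div_add_mod b' d₂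
    rw [mul_comm] at e e'
    generalize hgb : b / d₂ = q at hA hq e
    generalize hgb' : b' / d₂ = q' at hA hq' e'
    generalize hmb : b % d₂ = u at hB e
    generalize hmb' : b' % d₂ = u' at hB e'
    have hdiv : q' = q := by
      rcases Nat.lt_or_ge (q + 1) n with h1 | h1 <;>
        rcases Nat.lt_or_ge (q' + 1) n with h2 | h2
      · rw [Nat.mod_eq_of_lt h2, Nat.mod_eq_of_lt h1] at hA; omega
      · rw [show q' + 1 = n by omega, Nat.mod_self, Nat.mod_eq_of_lt h1] at hA; omega
      · rw [Nat.mod_eq_of_lt h2, show q + 1 = n by omega, Nat.mod_self] at hA; omega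
      · omega
    rw [hdiv, hB] at e'
    omega

private lemma x1_cc_large {n d₂ : ℕ} (ii jj aa cc : ℕ) (haa : aa < d₂) (hcc : d₂ ≤ cc) :
    (x1 n ii jj aa cc : k) = 0 := by
  rw [x1, if_neg]; rintro ⟨-, h⟩; omega

private lemma dent_cc_small {d₀ d₂ : ℕ} (jj c' cc : ℕ) (hcc : cc < d₂) :
    (dent d₀ d₂ jj c' cc : k) = 0 := by
  rw [dent, if_neg]; rintro ⟨-, h⟩; omega

private lemma dent_diag {d₀ d₂ : ℕ} (hdd : 0 < d₀ - d₂) (u u' : ℕ) :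
    (dent d₀ d₂ (u' / (d₀ - d₂)) u (d₂ + u' % (d₀ - d₂)) : k) = if u = u' then 1 else 0 := by
  by_cases h : u = u'
  · subst h; rw [dent, if_pos ⟨rfl, rfl⟩, if_pos rfl]
  · rw [dent, if_neg, if_neg h]
    rintro ⟨hA, hB⟩
    apply h
    have e := Nat.div_add_mod u (d₀ - d₂)
    have e' := Nat.div_add_mod u' (d₀ - d₂)
    rw [← hA] at e
    omega

end moreconstruction



/-- A stratum datum of type `(d₀, d₁, d₂)` over `k`: families
`A : Fin n → Matrix (Fin d₂) (Fin d₁) k`, `C : Fin n → Matrix (Fin d₁) (Fin d₀) k`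
with `∑ᵢ Aᵢ Cᵢ = 0`, the images of the `Cᵢ` spanning `k^{d₁}` and the images of
the `Aᵢ` spanning `k^{d₂}`. These correspond to representations of
`𝒜 = k⟨x₁,…,xₙ⟩/((x₁,…,xₙ)³ + (∑ xᵢ²))` with radical layering `(d₀,d₁,d₂)`. -/
def IsStratumDatum (k : Type*) [Field k] {n d₀ d₁ d₂ : ℕ}
    (A : Fin n → Matrix (Fin d₂) (Fin d₁) k)
    (C : Fin n → Matrix (Fin d₁) (Fin d₀) k) : Prop :=
  (∑ i, A i * C i) = 0 ∧
  (⨆ i, LinearMap.range (Matrix.mulVecLin (C i))) = ⊤ ∧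
  (⨆ i, LinearMap.range (Matrix.mulVecLin (A i))) = ⊤

/-- Equivalent form of Lemma 5.10 of the paper: under the stated hypotheses,
the minimum over all stratum data `(A, C)` of type `(d₀, d₁, d₂)` of
`dim ⨅_{i,j} ker (Aᵢ · Cⱼ)` equals `d₀ − (n²−1)·d₂` (truncated subtraction);
this is the `B`-independent part of the generic second socle. -/
theorem stmt13 (k : Type*) [Field k] [IsAlgClosed k] (hk : ringChar k ≠ 2)
    (n : ℕ) (hn : 1 ≤ n) (d₀ d₁ d₂ : ℕ)
    (h1 : d₁ ≤ n * d₀) (h2 : n * d₂ ≤ (n ^ 2 - 1) * d₁)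
    (h3 : n * d₂ < d₁) (h4 : d₀ + d₂ ≤ n * d₁) :
    (∀ (A : Fin n → Matrix (Fin d₂) (Fin d₁) k)
       (C : Fin n → Matrix (Fin d₁) (Fin d₀) k), IsStratumDatum k A C →
        d₀ - (n ^ 2 - 1) * d₂ ≤
          Module.finrank k
            ↥(⨅ p : Fin n × Fin n,
              LinearMap.ker (Matrix.mulVecLin (A p.1 * C p.2)))) ∧
    (∃ (A : Fin n → Matrix (Fin d₂) (Fin d₁) k)
       (C : Fin n → Matrix (Fin d₁) (Fin d₀) k), IsStratumDatum k A C ∧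
        Module.finrank k
            ↥(⨅ p : Fin n × Fin n,
              LinearMap.ker (Matrix.mulVecLin (A p.1 * C p.2))) =
          d₀ - (n ^ 2 - 1) * d₂) := by
  have hnn : n ^ 2 = n * n := by ring
  constructor
  · rintro A C ⟨hsum, -, -⟩
    have hlow := lower_bound hn A C hsum
    rw [hnn]
    exact hlow
  · by_cases hd₂0 : d₂ = 0
    · subst hd₂0
      have hd₁ : 0 < d₁ := by omega
      have hd₀ : 0 < d₀ := by
        rcases Nat.eq_zero_or_pos d₀ with h | h
        · subst h; simp at h1; omega
        · exact h
      refine ⟨(fun _ : Fin n => (0 : Matrix (Fin 0) (Fin d₁) k)), c0mat n d₀ d₁,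
        ⟨?_, ?_, ?_⟩, ?_⟩
      · ext a c; exact a.elim0
      · exact c0mat_sup_range hd₀ h1
      · apply Subsingleton.elim
      · have htop : (⨅ p : Fin n × Fin n, LinearMap.ker (Matrix.mulVecLin
            ((fun _ : Fin n => (0 : Matrix (Fin 0) (Fin d₁) k)) p.1 * c0mat n d₀ d₁ p.2))) =
            ⊤ := by
          rw [eq_top_iff]
          intro z _
          rw [Submodule.mem_iInf]
          intro p
          rw [LinearMap.mem_ker]
          apply Subsingleton.elim
        erw [htop]
        rw [finrank_top, Module.finrank_fin_fun]
        simp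
    · have hd₂ : 0 < d₂ := Nat.pos_of_ne_zero hd₂0
      have hn2 : 2 ≤ n := by
        rcases Nat.lt_or_ge n 2 with h | h
        · have hn1 : n = 1 := by omega
          subst hn1
          norm_num at h2
          omega
        · exact h
      have hd₂d₀ : d₂ < d₀ := by
        rcases Nat.lt_or_ge d₂ d₀ with h | h
        · exact h
        · exfalso
          have := Nat.mul_le_mul_left n h
          omega
      have hd₀ : 0 < d₀ := by omega
      have hnd : n * d₂ ≤ d₁ := le_of_lt h3
      have hd₂d₁ : d₂ ≤ d₁ := by
        have h5 : 1 * d₂ ≤ n * d₂ := Nat.mul_le_mul_right _ (by omega)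
        omega
      have hdd : 0 < d₀ - d₂ := by omega
      have hn0 : 0 < n := by omega
      set r : ℕ := min d₀ ((n * n - 1) * d₂) with hrdef
      have hrd₀ : r ≤ d₀ := min_le_left _ _
      have hrd₂ : r ≤ (n * n - 1) * d₂ := min_le_right _ _
      have htail : ∀ bb : ℕ, bb < d₁ → n * d₂ ≤ bb → bb - n * d₂ < n * (d₀ - d₂) := by
        intro bb h hnb
        have h5 : n * (d₀ - d₂) = n * d₀ - n * d₂ := Nat.mul_sub n d₀ d₂
        omega
      set ρF : Fin d₁ → Fin n × Fin d₀ := fun b =>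
        if hb : (b : ℕ) < n * d₂ then
          (⟨((b : ℕ) / d₂ + 1) % n, Nat.mod_lt _ hn0⟩,
           ⟨(b : ℕ) % d₂, lt_trans (Nat.mod_lt _ hd₂) hd₂d₀⟩)
        else
          (⟨((b : ℕ) - n * d₂) / (d₀ - d₂),
             (Nat.div_lt_iff_lt_mul hdd).mpr (htail _ b.2 (le_of_not_gt hb))⟩,
           ⟨d₂ + ((b : ℕ) - n * d₂) % (d₀ - d₂), by
             have := Nat.mod_lt ((b : ℕ) - n * d₂) hdd; omega⟩) with hρF
      have hρ1 : ∀ u : Fin d₁, ((ρF u).1 : ℕ) =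
          (if (u : ℕ) < n * d₂ then ((u : ℕ) / d₂ + 1) % n
           else ((u : ℕ) - n * d₂) / (d₀ - d₂)) := by
        intro u
        by_cases hu : (u : ℕ) < n * d₂
        · simp only [hρF]; rw [dif_pos hu, if_pos hu]
        · simp only [hρF]; rw [dif_neg hu, if_neg hu]
      have hρ2 : ∀ u : Fin d₁, ((ρF u).2 : ℕ) =
          (if (u : ℕ) < n * d₂ then (u : ℕ) % d₂
           else d₂ + ((u : ℕ) - n * d₂) % (d₀ - d₂)) := by
        intro u
        by_cases hu : (u : ℕ) < n * d₂
        · simp only [hρF]; rw [dif_pos hu, if_pos hu]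
        · simp only [hρF]; rw [dif_neg hu, if_neg hu]
      set centP : ℕ → ℕ → ℕ → Polynomial k := fun jj bb cc =>
        if bb < n * d₂ then
          Polynomial.C (x0 n d₂ d₀ (bb / d₂) jj (bb % d₂) cc) * (1 - Polynomial.X) +
            Polynomial.C (x1 n (bb / d₂) jj (bb % d₂) cc) * Polynomial.X
        else Polynomial.C (dent d₀ d₂ jj (bb - n * d₂) cc) * Polynomial.X with hcentP
      have hevalC : ∀ (t : k) (jj bb cc : ℕ),
          Polynomial.eval t (centP jj bb cc) = cent t n d₀ d₂ jj bb cc := by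
        intro t jj bb cc
        by_cases hbb : bb < n * d₂
        · simp only [hcentP, cent, if_pos hbb, xm]
          simp
        · simp only [hcentP, cent, if_neg hbb]
          simp
      set Np : Matrix (Fin d₁) (Fin d₁) (Polynomial k) :=
        Matrix.of (fun b b' : Fin d₁ => centP ((ρF b').1 : ℕ) (b : ℕ) ((ρF b').2 : ℕ))
        with hNp
      set Mp : Matrix (Fin r) (Fin r) (Polynomial k) :=
        Matrix.of (fun s s' : Fin r =>
          Polynomial.C (x0 n d₂ d₀ ((s : ℕ) / d₂ / n) (((s : ℕ) / d₂) % n) ((s : ℕ) % d₂)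
              (s' : ℕ)) * (1 - Polynomial.X) +
          Polynomial.C (x1 n ((s : ℕ) / d₂ / n) (((s : ℕ) / d₂) % n) ((s : ℕ) % d₂)
              (s' : ℕ)) * Polynomial.X) with hMp
      have hMeval : ∀ t : k, Mp.map (Polynomial.eval t) =
          Matrix.of (fun s s' : Fin r =>
            xm t n d₂ d₀ ((s : ℕ) / d₂ / n) (((s : ℕ) / d₂) % n) ((s : ℕ) % d₂) (s' : ℕ)) := by
        intro t
        ext s s'
        simp only [hMp, Matrix.map_apply, Matrix.of_apply, xm]
        simp
      have hMp0 : Mp.map (Polynomial.eval 0) = 1 := by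
        rw [hMeval 0]
        ext s s'
        rw [Matrix.of_apply, Matrix.one_apply]
        have hx : xm (0 : k) n d₂ d₀ ((s : ℕ) / d₂ / n) (((s : ℕ) / d₂) % n) ((s : ℕ) % d₂)
            (s' : ℕ) =
            x0 n d₂ d₀ ((s : ℕ) / d₂ / n) (((s : ℕ) / d₂) % n) ((s : ℕ) % d₂) (s' : ℕ) := by
          rw [xm]; ring
        rw [hx, x0_entry hn2 hd₂ hrd₀ hrd₂ _ _ s.2]
        by_cases h : s = s'
        · rw [if_pos (by rw [h]), if_pos h]
        · rw [if_neg (fun hc => h (Fin.ext hc.symm)), if_neg h]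
      have hNeval : ∀ t : k, Np.map (Polynomial.eval t) =
          Matrix.of (fun b b' : Fin d₁ => cmat t n d₀ d₁ d₂ (ρF b').1 b (ρF b').2) := by
        intro t
        ext b b'
        simp only [hNp, Matrix.map_apply, Matrix.of_apply, cmat]
        exact hevalC t _ _ _
      have hNp1 : Np.map (Polynomial.eval 1) = 1 := by
        rw [hNeval 1]
        ext b b'
        rw [Matrix.of_apply, Matrix.one_apply]
        show cent (1 : k) n d₀ d₂ ((ρF b').1 : ℕ) (b : ℕ) ((ρF b').2 : ℕ) = _
        rw [hρ1 b', hρ2 b']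
        by_cases hb : (b : ℕ) < n * d₂
        · by_cases hb' : (b' : ℕ) < n * d₂
          · rw [if_pos hb', if_pos hb', cent, if_pos hb]
            have hxm : xm (1 : k) n d₂ d₀ ((b : ℕ) / d₂) (((b' : ℕ) / d₂ + 1) % n)
                ((b : ℕ) % d₂) ((b' : ℕ) % d₂) =
                x1 n ((b : ℕ) / d₂) (((b' : ℕ) / d₂ + 1) % n) ((b : ℕ) % d₂) ((b' : ℕ) % d₂) := by
              rw [xm]; ring
            rw [hxm, head_head hd₂ _ _ hb hb']
            by_cases h : (b : ℕ) = (b' : ℕ)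
            · rw [if_pos h, if_pos (Fin.ext h)]
            · rw [if_neg h, if_neg (fun hc => h (congrArg Fin.val hc))]
          · rw [if_neg hb', if_neg hb', cent, if_pos hb]
            have hxm : xm (1 : k) n d₂ d₀ ((b : ℕ) / d₂) (((b' : ℕ) - n * d₂) / (d₀ - d₂))
                ((b : ℕ) % d₂) (d₂ + ((b' : ℕ) - n * d₂) % (d₀ - d₂)) =
                x1 n ((b : ℕ) / d₂) (((b' : ℕ) - n * d₂) / (d₀ - d₂)) ((b : ℕ) % d₂)
                  (d₂ + ((b' : ℕ) - n * d₂) % (d₀ - d₂)) := by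
              rw [xm]; ring
            rw [hxm, x1_cc_large _ _ _ _ (Nat.mod_lt _ hd₂) (Nat.le_add_right _ _)]
            rw [if_neg (fun hc : b = b' => hb' (hc ▸ hb))]
        · by_cases hb' : (b' : ℕ) < n * d₂
          · rw [if_pos hb', if_pos hb', cent, if_neg hb]
            rw [dent_cc_small _ _ _ (Nat.mod_lt _ hd₂), zero_mul]
            rw [if_neg (fun hc : b = b' => hb (by rw [hc]; exact hb'))]
          · rw [if_neg hb', if_neg hb', cent, if_neg hb]
            rw [mul_one, dent_diag hdd]
            by_cases h : b = b'
            · rw [if_pos (by rw [h]), if_pos h]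
            · rw [if_neg, if_neg h]
              intro hc
              apply h
              apply Fin.ext
              omega
      have hMdet : Mp.det ≠ 0 := by
        intro hzero
        have h2' := RingHom.map_det (Polynomial.evalRingHom (0 : k)) Mp
        rw [RingHom.mapMatrix_apply, Polynomial.coe_evalRingHom, hzero, hMp0,
          Matrix.det_one] at h2'
        simp at h2'
      have hNdet : Np.det ≠ 0 := by
        intro hzero
        have h2' := RingHom.map_det (Polynomial.evalRingHom (1 : k)) Np
        rw [RingHom.mapMatrix_apply, Polynomial.coe_evalRingHom, hzero, hNp1,
          Matrix.det_one] at h2'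
        simp at h2'
      obtain ⟨t, htM, htN⟩ : ∃ t : k, Polynomial.eval t Mp.det ≠ 0 ∧
          Polynomial.eval t Np.det ≠ 0 := by
        by_contra hcon
        push_neg at hcon
        have hprod : Mp.det * Np.det ≠ 0 := mul_ne_zero hMdet hNdet
        apply hprod
        apply Polynomial.zero_of_eval_zero
        intro x
        rw [Polynomial.eval_mul]
        by_cases hx : Polynomial.eval x Mp.det = 0
        · rw [hx, zero_mul]
        · rw [hcon x hx, mul_zero]
      set selF : Fin r → (Fin n × Fin n) × Fin d₂ := fun s =>
        ((⟨(s : ℕ) / d₂ / n, by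
            have ha : (s : ℕ) / d₂ < n * n - 1 :=
              (Nat.div_lt_iff_lt_mul hd₂).mpr (lt_of_lt_of_le s.2 hrd₂)
            exact (Nat.div_lt_iff_lt_mul hn0).mpr (lt_of_lt_of_le ha (Nat.sub_le _ _))⟩,
          ⟨((s : ℕ) / d₂) % n, Nat.mod_lt _ hn0⟩),
         ⟨(s : ℕ) % d₂, Nat.mod_lt _ hd₂⟩) with hselF
      set colsF : Fin r → Fin d₀ := fun s' => ⟨(s' : ℕ), lt_of_lt_of_le s'.2 hrd₀⟩ with hcolsF
      refine ⟨amat n d₁ d₂, cmat t n d₀ d₁ d₂, ⟨sum_amat_cmat t hn2 hd₂ hnd, ?_, ?_⟩, ?_⟩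
      · apply sup_range_eq_top_of_det (cmat t n d₀ d₁ d₂) ρF
        intro hzero
        apply htN
        have h2' := RingHom.map_det (Polynomial.evalRingHom t) Np
        rw [RingHom.mapMatrix_apply, Polynomial.coe_evalRingHom, hNeval t] at h2'
        rw [h2']
        exact hzero
      · exact amat_sup_range hn0 hd₂d₁
      · apply le_antisymm
        · have hEq2 : (Matrix.of fun s s' : Fin r =>
              (amat (k := k) n d₁ d₂ (selF s).1.1 * cmat t n d₀ d₁ d₂ (selF s).1.2)
                (selF s).2 (colsF s')) = Mp.map (Polynomial.eval t) := by
            rw [hMeval t]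
            refine Matrix.ext fun s s' => ?_
            rw [Matrix.of_apply, Matrix.of_apply]
            erw [amat_mul_cmat t hd₂ hnd]
            rw [Matrix.of_apply]
          have hdet2 : (Matrix.of fun s s' : Fin r =>
              (amat (k := k) n d₁ d₂ (selF s).1.1 * cmat t n d₀ d₁ d₂ (selF s).1.2)
                (selF s).2 (colsF s')).det ≠ 0 := by
            rw [hEq2]
            intro hzero
            apply htM
            have h2' := RingHom.map_det (Polynomial.evalRingHom t) Mp
            rw [RingHom.mapMatrix_apply, Polynomial.coe_evalRingHom] at h2'
            rw [h2']
            exact hzero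
          have hub := finrank_iInf_ker_le
            (fun p : Fin n × Fin n => amat (k := k) n d₁ d₂ p.1 * cmat t n d₀ d₁ d₂ p.2)
            selF colsF hdet2
          have heq : d₀ - r = d₀ - (n ^ 2 - 1) * d₂ := by
            rw [hnn]; omega
          rw [← heq]
          exact hub
        · have hlb := lower_bound (by omega : 1 ≤ n) (amat (k := k) n d₁ d₂)
            (cmat t n d₀ d₁ d₂) (sum_amat_cmat t hn2 hd₂ hnd)
          rw [hnn]
          exact hlb
end

section
/- Let k be an algebraically closed field with char k ≠ 2, n ≥ 2 and a ≥ 2 natural numbers, and set d₀ = a, d₁ = n·(a−1), d₂ = (n²−1)·(a−1). For a stratum datum (A,C) of type (d₀,d₁,d₂) and B : Fin n → Matrix (Fin d₂) (Fin d₀) k, let M i be the square matrix of size d₂+d₁+d₀ with block form [[0, A i, B i],[0, 0, C i],[0, 0, 0]]. Then: (1) every stratum datum (A,C) of this type satisfies Module.finrank k (⨅_i LinearMap.ker (Matrix.mulVecLin (C i))) ≥ 1; (2) there exists a triple (A,B,C) with Module.finrank k (⨅_i LinearMap.ker (Matrix.mulVecLin (M i))) = (n²−1)·(a−1) and Module.finrank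 k (⨅_{i,j} LinearMap.ker (Matrix.mulVecLin (M i * M j))) = (n²−1)·(a−1) + n·(a−1) + 1. -/
open Matrix LinearMap Function

section Helpers
variable {k : Type*} [Field k]

lemma aux_finrank_ker_funLeft {ι β : Type*} [Fintype ι] [Fintype β]
    (f : β → ι) (hf : Function.Injective f) :
    Module.finrank k ↥(LinearMap.ker (LinearMap.funLeft k k f)) =
      Fintype.card ι - Fintype.card β := by
  have hsurj : Function.Surjective (LinearMap.funLeft k k f) :=
    LinearMap.funLeft_surjective_of_injective k k f hf
  have h := (LinearMap.funLeft k k f).finrank_range_add_finrank_ker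
  rw [LinearMap.range_eq_top.mpr hsurj] at h
  simp only [finrank_top, Module.finrank_pi] at h
  omega

lemma aux_mulVecLin_reindex {α β α' β' : Type*} [Fintype β] [Fintype β']
    (e : α ≃ α') (f : β ≃ β') (M : Matrix α β k) :
    Matrix.mulVecLin (Matrix.reindex e f M) =
      (LinearMap.funLeft k k ⇑e.symm).comp
        ((Matrix.mulVecLin M).comp (LinearMap.funLeft k k ⇑f)) := by
  ext v x
  rw [Matrix.mulVecLin_apply, Matrix.reindex_apply, Matrix.submatrix_mulVec_equiv]
  rfl

lemma aux_ker_mulVecLin_reindex {α β α' β' : Type*} [Fintype β] [Fintype β']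
    (e : α ≃ α') (f : β ≃ β') (M : Matrix α β k) :
    LinearMap.ker (Matrix.mulVecLin (Matrix.reindex e f M)) =
      Submodule.comap (LinearMap.funLeft k k ⇑f)
        (LinearMap.ker (Matrix.mulVecLin M)) := by
  have hE : LinearMap.ker (LinearMap.funLeft k k ⇑e.symm) = ⊥ :=
    LinearMap.ker_eq_bot.mpr
      (LinearMap.funLeft_injective_of_surjective k k _ e.symm.surjective)
  rw [aux_mulVecLin_reindex, LinearMap.ker_comp, hE, Submodule.comap_bot,
    LinearMap.ker_comp]

lemma aux_range_mulVecLin_reindex {α β α' β' : Type*} [Fintype β] [Fintype β']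
    (e : α ≃ α') (f : β ≃ β') (M : Matrix α β k) :
    LinearMap.range (Matrix.mulVecLin (Matrix.reindex e f M)) =
      Submodule.map (LinearMap.funLeft k k ⇑e.symm)
        (LinearMap.range (Matrix.mulVecLin M)) := by
  rw [aux_mulVecLin_reindex, LinearMap.range_comp]
  congr 1
  rw [LinearMap.range_comp, LinearMap.range_eq_top.mpr
    (LinearMap.funLeft_surjective_of_injective k k _ f.injective), Submodule.map_top]

lemma aux_finrank_comap {α β : Type*} (e : β ≃ α) (p : Submodule k (β → k)) :
    Module.finrank k ↥(Submodule.comap (LinearMap.funLeft k k ⇑e) p) =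
      Module.finrank k ↥p := by
  have h : Submodule.comap ((LinearEquiv.funCongrLeft k k e :
        (α → k) ≃ₗ[k] (β → k)) : (α → k) →ₗ[k] (β → k)) p =
      Submodule.map ((LinearEquiv.funCongrLeft k k e).symm :
        (β → k) →ₗ[k] (α → k)) p :=
    Submodule.comap_equiv_eq_map_symm (LinearEquiv.funCongrLeft k k e) p
  rw [show LinearMap.funLeft k k ⇑e = ((LinearEquiv.funCongrLeft k k e :
        (α → k) ≃ₗ[k] (β → k)) : (α → k) →ₗ[k] (β → k)) from rfl, h]
  exact LinearEquiv.finrank_map_eq _ _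

end Helpers
section Construction
variable (k : Type*) [Field k]

/-- Index type for a basis of the degree-2 component of `𝒜`. -/
abbrev P2 (n : ℕ) [NeZero n] : Type := {p : Fin n × Fin n // p ≠ (0, 0)}

/-- Coordinates of the class of the monomial `xᵢxⱼ` in the degree-2 component. -/
def br {n : ℕ} [NeZero n] (i j : Fin n) (q : P2 n) : k :=
  if (i, j) = ((0 : Fin n), (0 : Fin n)) then (if q.1.1 = q.1.2 then -1 else 0)
  else if q.1 = (i, j) then 1 else 0

lemma sum_br {n : ℕ} [NeZero n] (q : P2 n) : ∑ i, br k i i q = 0 := by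
  obtain ⟨⟨l₁, l₂⟩, h⟩ := q
  by_cases hl : l₁ = l₂
  · subst hl
    have hl0 : l₁ ≠ 0 := fun h0 => h (by simp [h0])
    have key : ∀ i : Fin n, br k i i ⟨(l₁, l₁), h⟩ =
        (if i = l₁ then 1 else 0) + (if i = 0 then -1 else 0) := by
      intro i
      by_cases hi : i = 0
      · subst hi
        simp [br, Ne.symm hl0]
      · have : ((i, i) : Fin n × Fin n) ≠ (0, 0) := by
          simp [Prod.ext_iff, hi]
        simp only [br, if_neg this]
        by_cases hil : i = l₁
        · simp [hil, hl0]
        · simp only [Prod.mk.injEq]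
          rw [if_neg (fun h' : l₁ = i ∧ l₁ = i => hil h'.1.symm), if_neg hil, if_neg hi,
            add_zero]
    rw [Finset.sum_congr rfl (fun i _ => key i), Finset.sum_add_distrib]
    simp
  · apply Finset.sum_eq_zero
    intro i _
    simp only [br]
    split_ifs with h1 h2
    · simp [hl]
    · rw [Prod.ext_iff] at h2
      exact absurd (h2.1.trans h2.2.symm) hl
    · rfl
end Construction
section Matrices
variable (k : Type*) [Field k] (n m : ℕ) [NeZero n] [NeZero m]

def matA (i : Fin n) : Matrix (P2 n × Fin m) (Fin n × Fin m) k :=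
  Matrix.of fun qt js => if qt.2 = js.2 then br k i js.1 qt.1 else 0

def matC (i : Fin n) : Matrix (Fin n × Fin m) (Fin m ⊕ Unit) k :=
  Matrix.of fun jt w =>
    Sum.elim (fun s => if jt.2 = s ∧ jt.1 = i then (1 : k) else 0) (fun _ => 0) w

def matB (i : Fin n) : Matrix (P2 n × Fin m) (Fin m ⊕ Unit) k :=
  Matrix.of fun qt w => Sum.elim (fun _ => (0 : k))
    (fun _ => if i = 1 ∧ (qt.1 : Fin n × Fin n) = (1, 1) ∧ qt.2 = 0 then 1 else 0) w

lemma matC_mulVec (i : Fin n) (z : (Fin m ⊕ Unit) → k) (j : Fin n) (t : Fin m) :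
    (matC k n m i *ᵥ z) (j, t) = if j = i then z (Sum.inl t) else 0 := by
  by_cases hj : j = i <;>
    simp [matC, Matrix.mulVec, dotProduct, Fintype.sum_sum_type, hj, ite_and]

lemma matA_mulVec (i : Fin n) (y : Fin n × Fin m → k) (q : P2 n) (t : Fin m) :
    (matA k n m i *ᵥ y) (q, t) = ∑ j, br k i j q * y (j, t) := by
  simp [matA, Matrix.mulVec, dotProduct, Fintype.sum_prod_type, ite_mul,
    Finset.sum_ite_eq]

lemma matB_mulVec (i : Fin n) (z : (Fin m ⊕ Unit) → k) (q : P2 n) (t : Fin m) :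
    (matB k n m i *ᵥ z) (q, t) =
      if i = 1 ∧ (q : Fin n × Fin n) = (1, 1) ∧ t = 0 then z (Sum.inr ()) else 0 := by
  simp [matB, Matrix.mulVec, dotProduct, Fintype.sum_sum_type]

def blockM'' {ι₂ ι₁ ι₀ : Type*} (A : Matrix ι₂ ι₁ k) (B : Matrix ι₂ ι₀ k)
    (C : Matrix ι₁ ι₀ k) : Matrix (ι₂ ⊕ (ι₁ ⊕ ι₀)) (ι₂ ⊕ (ι₁ ⊕ ι₀)) k :=
  Matrix.fromBlocks 0 (Matrix.fromCols A B) 0 (Matrix.fromBlocks 0 C 0 0)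

lemma blockM''_mulVec {ι₂ ι₁ ι₀ : Type*} [Fintype ι₂] [Fintype ι₁] [Fintype ι₀]
    (A : Matrix ι₂ ι₁ k) (B : Matrix ι₂ ι₀ k) (C : Matrix ι₁ ι₀ k)
    (v : (ι₂ ⊕ (ι₁ ⊕ ι₀)) → k) :
    blockM'' k A B C *ᵥ v =
      Sum.elim (A *ᵥ (v ∘ Sum.inr ∘ Sum.inl) + B *ᵥ (v ∘ Sum.inr ∘ Sum.inr))
        (Sum.elim (C *ᵥ (v ∘ Sum.inr ∘ Sum.inr)) 0) := by
  have hv : v ∘ Sum.inr = Sum.elim (v ∘ Sum.inr ∘ Sum.inl) (v ∘ Sum.inr ∘ Sum.inr) := by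
    funext x; cases x <;> rfl
  funext x
  rcases x with q | (j | w) <;>
    simp [blockM'', Matrix.fromBlocks_mulVec, hv, Matrix.fromCols_mulVec_sumElim,
      Matrix.zero_mulVec]
lemma blockM''_mul {ι₂ ι₁ ι₀ : Type*} [Fintype ι₂] [Fintype ι₁] [Fintype ι₀]
    (A A' : Matrix ι₂ ι₁ k) (B B' : Matrix ι₂ ι₀ k) (C C' : Matrix ι₁ ι₀ k) :
    blockM'' k A B C * blockM'' k A' B' C' =
      Matrix.fromBlocks 0 (Matrix.fromCols 0 (A * C')) 0 0 := by
  rw [blockM'', blockM'', Matrix.fromBlocks_multiply, Matrix.fromCols_mul_fromBlocks,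
    Matrix.fromBlocks_multiply]
  simp

lemma mulVec_prod_shape {ι₂ ι₁ ι₀ : Type*} [Fintype ι₂] [Fintype ι₁] [Fintype ι₀]
    (W : Matrix ι₂ ι₀ k) (v : (ι₂ ⊕ (ι₁ ⊕ ι₀)) → k) :
    (Matrix.fromBlocks (0 : Matrix ι₂ ι₂ k) (Matrix.fromCols (0 : Matrix ι₂ ι₁ k) W)
        (0 : Matrix (ι₁ ⊕ ι₀) ι₂ k) 0) *ᵥ v =
      Sum.elim (W *ᵥ (v ∘ Sum.inr ∘ Sum.inr)) 0 := by
  have hv : v ∘ Sum.inr = Sum.elim (v ∘ Sum.inr ∘ Sum.inl) (v ∘ Sum.inr ∘ Sum.inr) := by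
    funext x; cases x <;> rfl
  rw [Matrix.fromBlocks_mulVec, hv, Matrix.fromCols_mulVec_sumElim]
  simp

end Matrices
section Core
variable (k : Type*) [Field k] (n m : ℕ) [NeZero n] [NeZero m]

lemma sum_matA_matC : ∑ i, matA k n m i * matC k n m i = 0 := by
  ext ⟨q, t⟩ w
  rw [Matrix.sum_apply, Matrix.zero_apply]
  rcases w with s | u
  · have : ∀ i : Fin n, (matA k n m i * matC k n m i) (q, t) (Sum.inl s) =
        (if t = s then br k i i q else 0) := by
      intro i
      rw [Matrix.mul_apply]
      rw [Fintype.sum_prod_type]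
      simp [matA, matC, ite_and, Finset.sum_ite_eq, mul_ite]
    rw [Finset.sum_congr rfl fun i _ => this i]
    by_cases hts : t = s
    · simp [hts, sum_br]
    · simp [hts]
  · have : ∀ i : Fin n, (matA k n m i * matC k n m i) (q, t) (Sum.inr u) = 0 := by
      intro i
      rw [Matrix.mul_apply]
      apply Finset.sum_eq_zero
      intro x _
      simp [matC]
    simp [this]

lemma iSup_range_matC :
    (⨆ i, LinearMap.range (Matrix.mulVecLin (matC k n m i))) = ⊤ := by
  rw [eq_top_iff, ← (Pi.basisFun k (Fin n × Fin m)).span_eq, Submodule.span_le]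
  rintro _ ⟨⟨j, t⟩, rfl⟩
  apply Submodule.mem_iSup_of_mem j
  refine ⟨Pi.single (Sum.inl t) 1, ?_⟩
  rw [Matrix.mulVecLin_apply]
  funext ⟨j', t'⟩
  rw [matC_mulVec]
  simp [Pi.basisFun_apply, Pi.single_apply, Prod.ext_iff, And.comm, ite_and]

lemma iSup_range_matA :
    (⨆ i, LinearMap.range (Matrix.mulVecLin (matA k n m i))) = ⊤ := by
  rw [eq_top_iff, ← (Pi.basisFun k (P2 n × Fin m)).span_eq, Submodule.span_le]
  rintro _ ⟨⟨⟨⟨i, j⟩, hq⟩, t⟩, rfl⟩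
  apply Submodule.mem_iSup_of_mem i
  refine ⟨Pi.single (j, t) 1, ?_⟩
  rw [Matrix.mulVecLin_apply]
  funext ⟨q', t'⟩
  rw [matA_mulVec]
  have : ∀ j' : Fin n, br k i j' q' * Pi.single (M := fun _ : Fin n × Fin m => k) (j, t) 1 (j', t') =
      if j' = j then (if t' = t then br k i j q' else 0) else 0 := by
    intro j'
    by_cases hj : j' = j <;> by_cases ht : t' = t <;>
      simp [hj, ht, Pi.single_apply, Prod.ext_iff]
  rw [Finset.sum_congr rfl fun j' _ => this j', Finset.sum_ite_eq' Finset.univ j]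
  have hbr : br k i j q' = if q' = ⟨(i, j), hq⟩ then 1 else 0 := by
    rw [br, if_neg hq]
    by_cases h : q'.1 = (i, j)
    · rw [if_pos h, if_pos (Subtype.ext h)]
    · rw [if_neg h, if_neg (fun hh => h (by rw [hh]))]
  simp [Pi.basisFun_apply, Pi.single_apply, Prod.ext_iff, hbr]
  by_cases h1 : q' = ⟨(i, j), hq⟩ <;> by_cases h2 : t' = t <;> simp [h1, h2, And.comm]
end Core
section Socle
variable (k : Type*) [Field k] (n m : ℕ) [NeZero n] [NeZero m]

lemma one_ne_zero_fin (hn : 2 ≤ n) : (1 : Fin n) ≠ 0 := by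
  refine Fin.ne_of_val_ne ?_
  rw [Fin.val_one', Fin.val_zero, Nat.mod_eq_of_lt (by omega)]
  exact one_ne_zero

lemma br_eval₁ {n : ℕ} [NeZero n] (i j : Fin n) (hij : ((i, j) : Fin n × Fin n) ≠ (0, 0))
    (q : P2 n) : br k i j q = if q = ⟨(i, j), hij⟩ then 1 else 0 := by
  rw [br, if_neg hij]
  by_cases h : q.1 = (i, j)
  · rw [if_pos h, if_pos (Subtype.ext h)]
  · rw [if_neg h, if_neg (fun hh => h (by rw [hh]))]

lemma br_diag0 {n : ℕ} [NeZero n] (q : P2 n) :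
    br k 0 0 q = if q.1.1 = q.1.2 then -1 else 0 := by rw [br, if_pos rfl]

lemma socle_eq (hn : 2 ≤ n) :
    (⨅ i : Fin n, LinearMap.ker (Matrix.mulVecLin
        (blockM'' k (matA k n m i) (matB k n m i) (matC k n m i)))) =
      LinearMap.ker (LinearMap.funLeft k k
        (Sum.inr : (Fin n × Fin m) ⊕ (Fin m ⊕ Unit) →
          (P2 n × Fin m) ⊕ ((Fin n × Fin m) ⊕ (Fin m ⊕ Unit)))) := by
  have h10 : (1 : Fin n) ≠ 0 := one_ne_zero_fin n hn
  have h11 : ((1, 1) : Fin n × Fin n) ≠ (0, 0) := by simp [Prod.ext_iff, h10]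
  ext v
  simp only [Submodule.mem_iInf, LinearMap.mem_ker, Matrix.mulVecLin_apply]
  set y := v ∘ Sum.inr ∘ Sum.inl with hy
  set z := v ∘ Sum.inr ∘ Sum.inr with hz
  constructor
  · intro hv
    have hcomp : ∀ i, (∀ p, (matA k n m i *ᵥ y + matB k n m i *ᵥ z) p = 0) ∧
        (∀ p, (matC k n m i *ᵥ z) p = 0) := by
      intro i
      have h := hv i
      rw [blockM''_mulVec] at h
      exact ⟨fun p => congrFun h (Sum.inl p),
             fun p => congrFun h (Sum.inr (Sum.inl p))⟩
    have hz1 : ∀ s : Fin m, z (Sum.inl s) = 0 := by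
      intro s
      have h := (hcomp 0).2 (0, s)
      rwa [matC_mulVec, if_pos rfl] at h
    have hA0 : ∀ p, (matA k n m 0 *ᵥ y) p = 0 := by
      intro p
      have h := (hcomp 0).1 p
      obtain ⟨q, t⟩ := p
      rw [Pi.add_apply, matB_mulVec, if_neg (by simp [Ne.symm h10])] at h
      simpa using h
    have hy0 : ∀ p, y p = 0 := by
      rintro ⟨j, t⟩
      by_cases hj : j = 0
      · subst hj
        have h := hA0 (⟨(1, 1), h11⟩, t)
        rw [matA_mulVec] at h
        have key : ∀ j' : Fin n, br k (0 : Fin n) j' ⟨(1, 1), h11⟩ * y (j', t) =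
            if j' = 0 then -y ((0 : Fin n), t) else 0 := by
          intro j'
          by_cases hj' : j' = 0
          · subst hj'
            rw [br_diag0, if_pos rfl, if_pos rfl]
            ring
          · have h0j' : (((0 : Fin n), j') : Fin n × Fin n) ≠ (0, 0) := by
              simp [Prod.ext_iff, hj']
            rw [br_eval₁ k _ _ h0j', if_neg (by
                intro hh
                rw [Subtype.mk.injEq, Prod.mk.injEq] at hh
                exact h10 hh.1), zero_mul, if_neg hj']
        rw [Finset.sum_congr rfl fun j' _ => key j',
          Finset.sum_ite_eq' Finset.univ (0 : Fin n)] at h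
        simpa using h
      · have h0j : ((0 : Fin n), j) ≠ ((0 : Fin n), (0 : Fin n)) := by
          simp [Prod.ext_iff, hj]
        have h := hA0 (⟨(0, j), h0j⟩, t)
        rw [matA_mulVec] at h
        have key : ∀ j' : Fin n, br k (0 : Fin n) j' ⟨(0, j), h0j⟩ * y (j', t) =
            if j' = j then y (j, t) else 0 := by
          intro j'
          by_cases hj' : j' = 0
          · subst hj'
            rw [br_diag0, if_neg (fun hh : (0 : Fin n) = j => hj hh.symm), zero_mul,
              if_neg (fun hh : (0 : Fin n) = j => hj hh.symm)]
          · have h2 : (((0 : Fin n), j') : Fin n × Fin n) ≠ (0, 0) := by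
              simp [Prod.ext_iff, hj']
            rw [br_eval₁ k _ _ h2]
            by_cases hjj : j' = j
            · subst hjj; rw [if_pos rfl, if_pos rfl, one_mul]
            · rw [if_neg (by
                  intro hh
                  rw [Subtype.mk.injEq, Prod.mk.injEq] at hh
                  exact hjj hh.2.symm), zero_mul, if_neg hjj]
        rw [Finset.sum_congr rfl fun j' _ => key j',
          Finset.sum_ite_eq' Finset.univ j] at h
        simpa using h
    have hzu : z (Sum.inr ()) = 0 := by
      have h := (hcomp 1).1 (⟨(1, 1), h11⟩, 0)
      rw [Pi.add_apply, matA_mulVec, matB_mulVec, if_pos ⟨rfl, rfl, rfl⟩] at h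
      have : ∀ j' : Fin n, br k (1 : Fin n) j' ⟨(1, 1), h11⟩ * y (j', 0) = 0 := by
        intro j'
        rw [hy0 (j', 0), mul_zero]
      rw [Finset.sum_congr rfl fun j' _ => this j', Finset.sum_const_zero,
        zero_add] at h
      exact h
    funext x
    rcases x with p | (s | u)
    · exact hy0 p
    · exact hz1 s
    · cases u; exact hzu
  · intro hv i
    have hy0 : y = 0 := by
      funext p; exact congrFun hv (Sum.inl p)
    have hz0 : z = 0 := by
      funext p; exact congrFun hv (Sum.inr p)
    rw [blockM''_mulVec, ← hy, ← hz, hy0, hz0]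
    funext x
    rcases x with q | (j | w) <;> simp [Matrix.mulVec_zero]

lemma socle2_eq (hn : 2 ≤ n) :
    (⨅ p : Fin n × Fin n, LinearMap.ker (Matrix.mulVecLin
        (blockM'' k (matA k n m p.1) (matB k n m p.1) (matC k n m p.1) *
         blockM'' k (matA k n m p.2) (matB k n m p.2) (matC k n m p.2)))) =
      LinearMap.ker (LinearMap.funLeft k k
        (fun t : Fin m => (Sum.inr (Sum.inr (Sum.inl t)) :
          (P2 n × Fin m) ⊕ ((Fin n × Fin m) ⊕ (Fin m ⊕ Unit))))) := by
  have h10 : (1 : Fin n) ≠ 0 := one_ne_zero_fin n hn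
  ext v
  simp only [Submodule.mem_iInf, LinearMap.mem_ker, Matrix.mulVecLin_apply, Prod.forall]
  set z := v ∘ Sum.inr ∘ Sum.inr with hz
  have hprod : ∀ i j : Fin n,
      (blockM'' k (matA k n m i) (matB k n m i) (matC k n m i) *
       blockM'' k (matA k n m j) (matB k n m j) (matC k n m j)) *ᵥ v =
      Sum.elim ((matA k n m i * matC k n m j) *ᵥ z) 0 := by
    intro i j
    rw [blockM''_mul, mulVec_prod_shape]
  constructor
  · intro hv
    funext t
    have h := congrFun ((hprod 0 1).symm.trans (hv 0 1)) (Sum.inl (⟨(0, 1), by simp [Prod.ext_iff, h10]⟩, t))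
    simp only [Sum.elim_inl, Pi.zero_apply] at h
    rw [← Matrix.mulVec_mulVec, matA_mulVec] at h
    have key : ∀ j' : Fin n, br k (0 : Fin n) j' ⟨((0 : Fin n), (1 : Fin n)), by simp [Prod.ext_iff, h10]⟩ *
        (matC k n m 1 *ᵥ z) (j', t) =
        if j' = 1 then (matC k n m 1 *ᵥ z) (1, t) else 0 := by
      intro j'
      by_cases hj' : j' = 0
      · subst hj'
        rw [br_diag0, if_neg (fun hh : (0 : Fin n) = 1 => h10 hh.symm), zero_mul,
          if_neg (fun hh : (0 : Fin n) = 1 => h10 hh.symm)]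
      · have h2 : (((0 : Fin n), j') : Fin n × Fin n) ≠ (0, 0) := by
          simp [Prod.ext_iff, hj']
        rw [br_eval₁ k _ _ h2]
        by_cases hj1 : j' = 1
        · subst hj1; rw [if_pos rfl, if_pos rfl, one_mul]
        · rw [if_neg (by
              intro hh
              rw [Subtype.mk.injEq, Prod.mk.injEq] at hh
              exact hj1 hh.2.symm), zero_mul, if_neg hj1]
    rw [Finset.sum_congr rfl fun j' _ => key j',
      Finset.sum_ite_eq' Finset.univ (1 : Fin n)] at h
    simp only [Finset.mem_univ, if_true] at h
    rw [matC_mulVec, if_pos rfl] at h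
    exact h
  · intro hv i j
    have hCz : matC k n m j *ᵥ z = 0 := by
      funext p
      obtain ⟨j', t⟩ := p
      rw [matC_mulVec]
      by_cases hj : j' = j
      · rw [if_pos hj]; exact congrFun hv t
      · rw [if_neg hj]; rfl
    rw [hprod, ← Matrix.mulVec_mulVec, hCz, Matrix.mulVec_zero]
    funext x
    rcases x with q | p <;> simp
end Socle

lemma aux_sum_mulVec {k : Type*} [Field k] {ι α β : Type*} [Fintype β] (s : Finset ι)
    (M : ι → Matrix α β k) (v : β → k) :
    (∑ i ∈ s, M i) *ᵥ v = ∑ i ∈ s, M i *ᵥ v := by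
  ext x
  simp only [Matrix.mulVec, dotProduct, Matrix.sum_apply, Finset.sum_apply,
    Finset.sum_mul]
  rw [Finset.sum_comm]

/-- The square matrix of size `d₂ + d₁ + d₀` (indexed by
`Fin d₂ ⊕ Fin d₁ ⊕ Fin d₀`) with block form
`[[0, A i, B i], [0, 0, C i], [0, 0, 0]]`. -/
def blockM {k : Type*} [Field k] {n d₀ d₁ d₂ : ℕ}
    (A : Fin n → Matrix (Fin d₂) (Fin d₁) k)
    (B : Fin n → Matrix (Fin d₂) (Fin d₀) k)
    (C : Fin n → Matrix (Fin d₁) (Fin d₀) k) (i : Fin n) :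
    Matrix (Fin d₂ ⊕ (Fin d₁ ⊕ Fin d₀)) (Fin d₂ ⊕ (Fin d₁ ⊕ Fin d₀)) k :=
  Matrix.fromBlocks 0 (Matrix.fromCols (A i) (B i))
    0 (Matrix.fromBlocks 0 (C i) 0 0)

/-- The first exceptional case of Theorem 1.2 of the paper: for the radical
layering `(a, n(a−1), (n²−1)(a−1))`, every stratum datum has `h₀ ≥ 1`, and the
generic socle layering is `((n²−1)(a−1), n(a−1)+1, a−1)`, witnessed by a
representation whose socle has dimension `(n²−1)(a−1)` and whose second socle
has dimension `(n²−1)(a−1) + n(a−1) + 1`. -/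
theorem stmt16 (k : Type*) [Field k] [IsAlgClosed k] (hk : ringChar k ≠ 2)
    (n : ℕ) (hn : 2 ≤ n) (a : ℕ) (ha : 2 ≤ a)
    (d₀ d₁ d₂ : ℕ) (hd₀ : d₀ = a) (hd₁ : d₁ = n * (a - 1))
    (hd₂ : d₂ = (n ^ 2 - 1) * (a - 1)) :
    (∀ (A : Fin n → Matrix (Fin d₂) (Fin d₁) k)
       (C : Fin n → Matrix (Fin d₁) (Fin d₀) k), IsStratumDatum k A C →
        1 ≤ Module.finrank k
            ↥(⨅ i, LinearMap.ker (Matrix.mulVecLin (C i)))) ∧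
    (∃ (A : Fin n → Matrix (Fin d₂) (Fin d₁) k)
       (B : Fin n → Matrix (Fin d₂) (Fin d₀) k)
       (C : Fin n → Matrix (Fin d₁) (Fin d₀) k), IsStratumDatum k A C ∧
        Module.finrank k
            ↥(⨅ i, LinearMap.ker (Matrix.mulVecLin (blockM A B C i))) =
          (n ^ 2 - 1) * (a - 1) ∧
        Module.finrank k
            ↥(⨅ p : Fin n × Fin n,
              LinearMap.ker
                (Matrix.mulVecLin (blockM A B C p.1 * blockM A B C p.2))) =
          (n ^ 2 - 1) * (a - 1) + n * (a - 1) + 1) := by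
  subst hd₀ hd₁ hd₂
  constructor
  · -- Part 1
    rintro A C ⟨hsum, -, hA⟩
    set φ : (Fin d₀ → k) →ₗ[k] (Fin n → Fin (n * (d₀ - 1)) → k) :=
      LinearMap.pi (fun i => Matrix.mulVecLin (C i)) with hφ
    set ψ : (Fin n → Fin (n * (d₀ - 1)) → k) →ₗ[k] (Fin ((n ^ 2 - 1) * (d₀ - 1)) → k) :=
      ∑ i, (Matrix.mulVecLin (A i)).comp (LinearMap.proj i) with hψ
    have hker : (⨅ i, LinearMap.ker (Matrix.mulVecLin (C i))) = LinearMap.ker φ :=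
      (LinearMap.ker_pi _).symm
    have hψφ : ψ.comp φ = 0 := by
      apply LinearMap.ext
      intro v
      rw [hψ]
      simp only [LinearMap.comp_apply, LinearMap.sum_apply, LinearMap.coe_comp,
        Function.comp_apply, LinearMap.proj_apply, hφ, LinearMap.pi_apply,
        Matrix.mulVecLin_apply, Matrix.mulVec_mulVec, LinearMap.zero_apply]
      rw [← aux_sum_mulVec, hsum, Matrix.zero_mulVec]
    have hrange : LinearMap.range ψ = ⊤ := by
      rw [eq_top_iff, ← hA]
      apply iSup_le
      intro i
      rintro w ⟨y, rfl⟩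
      refine ⟨Pi.single i y, ?_⟩
      rw [hψ]
      simp only [LinearMap.sum_apply, LinearMap.coe_comp, Function.comp_apply,
        LinearMap.proj_apply, Matrix.mulVecLin_apply]
      rw [Finset.sum_eq_single i]
      · rw [Pi.single_eq_same]
      · intro j _ hj
        rw [Pi.single_eq_of_ne hj, Matrix.mulVec_zero]
      · intro h; exact absurd (Finset.mem_univ i) h
    have e1 : Module.finrank k (LinearMap.range φ) + Module.finrank k (LinearMap.ker φ)
        = d₀ := by
      have := φ.finrank_range_add_finrank_ker
      rwa [Module.finrank_pi, Fintype.card_fin] at this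
    have e2 : Module.finrank k (LinearMap.range ψ) + Module.finrank k (LinearMap.ker ψ)
        = n * (n * (d₀ - 1)) := by
      have := ψ.finrank_range_add_finrank_ker
      rw [Module.finrank_pi_fintype] at this
      simpa [Module.finrank_pi] using this
    have e3 : Module.finrank k (LinearMap.range ψ) = (n ^ 2 - 1) * (d₀ - 1) := by
      rw [hrange, finrank_top, Module.finrank_pi, Fintype.card_fin]
    have e4 : Module.finrank k (LinearMap.range φ) ≤ Module.finrank k (LinearMap.ker ψ) :=
      Submodule.finrank_mono (LinearMap.range_le_ker_iff.mpr hψφ)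
    have key : (n ^ 2 - 1) * (d₀ - 1) + (d₀ - 1) = n * (n * (d₀ - 1)) := by
      have h1 : n * (n * (d₀ - 1)) = n ^ 2 * (d₀ - 1) := by ring
      have h2 : (n ^ 2 - 1) * (d₀ - 1) = n ^ 2 * (d₀ - 1) - (d₀ - 1) := by
        rw [Nat.sub_mul, one_mul]
      have h3 : (d₀ - 1) ≤ n ^ 2 * (d₀ - 1) := Nat.le_mul_of_pos_left _ (by positivity)
      omega
    rw [hker]
    omega
  · -- Part 2
    haveI : NeZero n := ⟨by omega⟩
    haveI : NeZero (d₀ - 1) := ⟨by omega⟩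
    have hcard2 : Fintype.card (P2 n) = n ^ 2 - 1 := by
      have h := Fintype.card_subtype_compl (fun p : Fin n × Fin n => p = ((0 : Fin n), (0 : Fin n)))
      rw [Fintype.card_subtype_eq, Fintype.card_prod, Fintype.card_fin] at h
      rw [show Fintype.card (P2 n) = Fintype.card {p : Fin n × Fin n // ¬ p = (0, 0)} from rfl, h]
      congr 1
      ring
    let e₂ : (P2 n × Fin (d₀ - 1)) ≃ Fin ((n ^ 2 - 1) * (d₀ - 1)) :=
      Fintype.equivFinOfCardEq (by rw [Fintype.card_prod, hcard2, Fintype.card_fin])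
    let e₁ : (Fin n × Fin (d₀ - 1)) ≃ Fin (n * (d₀ - 1)) :=
      Fintype.equivFinOfCardEq (by simp)
    let e₀ : (Fin (d₀ - 1) ⊕ Unit) ≃ Fin d₀ :=
      Fintype.equivFinOfCardEq (by simp; omega)
    set E : ((P2 n × Fin (d₀ - 1)) ⊕ ((Fin n × Fin (d₀ - 1)) ⊕ (Fin (d₀ - 1) ⊕ Unit)))
        ≃ (Fin ((n ^ 2 - 1) * (d₀ - 1)) ⊕ (Fin (n * (d₀ - 1)) ⊕ Fin d₀)) :=
      Equiv.sumCongr e₂ (Equiv.sumCongr e₁ e₀) with hE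
    have hblock : ∀ i : Fin n,
        blockM (fun i => Matrix.reindex e₂ e₁ (matA k n (d₀ - 1) i))
          (fun i => Matrix.reindex e₂ e₀ (matB k n (d₀ - 1) i))
          (fun i => Matrix.reindex e₁ e₀ (matC k n (d₀ - 1) i)) i =
        Matrix.reindex E E (blockM'' k (matA k n (d₀ - 1) i) (matB k n (d₀ - 1) i)
          (matC k n (d₀ - 1) i)) := by
      intro i
      ext x y
      rcases x with x2 | (x1 | x0) <;> rcases y with y2 | (y1 | y0) <;> rfl
    refine ⟨fun i => Matrix.reindex e₂ e₁ (matA k n (d₀ - 1) i),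
            fun i => Matrix.reindex e₂ e₀ (matB k n (d₀ - 1) i),
            fun i => Matrix.reindex e₁ e₀ (matC k n (d₀ - 1) i), ⟨?_, ?_, ?_⟩, ?_, ?_⟩
    · have h1 : ∀ i : Fin n,
          Matrix.reindex e₂ e₁ (matA k n (d₀ - 1) i) * Matrix.reindex e₁ e₀ (matC k n (d₀ - 1) i)
          = (matA k n (d₀ - 1) i * matC k n (d₀ - 1) i).submatrix ⇑e₂.symm ⇑e₀.symm := by
        intro i
        rw [Matrix.reindex_apply, Matrix.reindex_apply, Matrix.submatrix_mul_equiv]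
      rw [Finset.sum_congr rfl fun i _ => h1 i]
      have h2 : ∑ i : Fin n,
          (matA k n (d₀ - 1) i * matC k n (d₀ - 1) i).submatrix ⇑e₂.symm ⇑e₀.symm
          = (∑ i : Fin n, matA k n (d₀ - 1) i * matC k n (d₀ - 1) i).submatrix ⇑e₂.symm ⇑e₀.symm := by
        ext x y
        simp [Matrix.sum_apply]
      rw [h2, sum_matA_matC]
      simp
    · have hr : ∀ i : Fin n,
          LinearMap.range (Matrix.mulVecLin (Matrix.reindex e₁ e₀ (matC k n (d₀ - 1) i))) =
          Submodule.map (LinearMap.funLeft k k ⇑e₁.symm)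
            (LinearMap.range (Matrix.mulVecLin (matC k n (d₀ - 1) i))) :=
        fun i => aux_range_mulVecLin_reindex e₁ e₀ _
      rw [iSup_congr hr, ← Submodule.map_iSup, iSup_range_matC, Submodule.map_top,
        LinearMap.range_eq_top.mpr
          (LinearMap.funLeft_surjective_of_injective k k _ e₁.symm.injective)]
    · have hr : ∀ i : Fin n,
          LinearMap.range (Matrix.mulVecLin (Matrix.reindex e₂ e₁ (matA k n (d₀ - 1) i))) =
          Submodule.map (LinearMap.funLeft k k ⇑e₂.symm)
            (LinearMap.range (Matrix.mulVecLin (matA k n (d₀ - 1) i))) :=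
        fun i => aux_range_mulVecLin_reindex e₂ e₁ _
      rw [iSup_congr hr, ← Submodule.map_iSup, iSup_range_matA, Submodule.map_top,
        LinearMap.range_eq_top.mpr
          (LinearMap.funLeft_surjective_of_injective k k _ e₂.symm.injective)]
    · have hker1 : ∀ i : Fin n,
          LinearMap.ker (Matrix.mulVecLin
            (blockM (fun i => Matrix.reindex e₂ e₁ (matA k n (d₀ - 1) i))
              (fun i => Matrix.reindex e₂ e₀ (matB k n (d₀ - 1) i))
              (fun i => Matrix.reindex e₁ e₀ (matC k n (d₀ - 1) i)) i)) =
          Submodule.comap (LinearMap.funLeft k k ⇑E)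
            (LinearMap.ker (Matrix.mulVecLin (blockM'' k (matA k n (d₀ - 1) i)
              (matB k n (d₀ - 1) i) (matC k n (d₀ - 1) i)))) := by
        intro i
        rw [hblock i, aux_ker_mulVecLin_reindex]
      rw [iInf_congr hker1, ← Submodule.comap_iInf, socle_eq k n (d₀ - 1) hn,
        aux_finrank_comap E, aux_finrank_ker_funLeft _ Sum.inr_injective]
      simp only [Fintype.card_sum, Fintype.card_prod, Fintype.card_fin,
        Fintype.card_unit, hcard2]
      generalize (n ^ 2 - 1) * (d₀ - 1) = X
      generalize n * (d₀ - 1) = Y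
      omega
    · have hker2 : ∀ p : Fin n × Fin n,
          LinearMap.ker (Matrix.mulVecLin
            (blockM (fun i => Matrix.reindex e₂ e₁ (matA k n (d₀ - 1) i))
              (fun i => Matrix.reindex e₂ e₀ (matB k n (d₀ - 1) i))
              (fun i => Matrix.reindex e₁ e₀ (matC k n (d₀ - 1) i)) p.1 *
             blockM (fun i => Matrix.reindex e₂ e₁ (matA k n (d₀ - 1) i))
              (fun i => Matrix.reindex e₂ e₀ (matB k n (d₀ - 1) i))
              (fun i => Matrix.reindex e₁ e₀ (matC k n (d₀ - 1) i)) p.2)) =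
          Submodule.comap (LinearMap.funLeft k k ⇑E)
            (LinearMap.ker (Matrix.mulVecLin
              (blockM'' k (matA k n (d₀ - 1) p.1) (matB k n (d₀ - 1) p.1)
                (matC k n (d₀ - 1) p.1) *
               blockM'' k (matA k n (d₀ - 1) p.2) (matB k n (d₀ - 1) p.2)
                (matC k n (d₀ - 1) p.2)))) := by
        intro p
        rw [hblock p.1, hblock p.2, Matrix.reindex_apply, Matrix.reindex_apply,
          Matrix.submatrix_mul_equiv, ← Matrix.reindex_apply,
          aux_ker_mulVecLin_reindex]
      rw [iInf_congr hker2, ← Submodule.comap_iInf, socle2_eq k n (d₀ - 1) hn,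
        aux_finrank_comap E, aux_finrank_ker_funLeft _
          (fun x y h => by simpa using h)]
      simp only [Fintype.card_sum, Fintype.card_prod, Fintype.card_fin,
        Fintype.card_unit, hcard2]
      generalize (n ^ 2 - 1) * (d₀ - 1) = X
      generalize n * (d₀ - 1) = Y
      omega
end

section
/- Let k be an algebraically closed field with char k ≠ 2, n ≥ 2 and a ≥ 2 natural numbers, and set d₀ = (n²−1)·(a−1), d₁ = n·(a−1) + 1, d₂ = a−1. For a stratum datum (A,C) of type (d₀,d₁,d₂) and B : Fin n → Matrix (Fin d₂) (Fin d₀) k, let M i be the square matrix of size d₂+d₁+d₀ with block form [[0, A i, B i],[0, 0, C i],[0, 0, 0]]. Then: (1) every such triple satisfies Module.finrank k (⨅_i LinearMap.ker (Matrix.mulVecLin (M i))) ≥ a and Module.finrank k (⨅_{i,j} LinearMap.ker (Matrix.mulVecLin (M i * M j))) ≥ a + n·(a−1); and (2) there exists a triple (A,B,C) with Module.finrank k (⨅_i LinearMap.ker (Matrix.mulVecLin (M i))) = a and Module.finrank k (⨅_{i,j} LinearMap.ker (Matrix.mulVecLin (M i * M j))) = a + n·(a−1). -/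
open Matrix LinearMap

section Helpers

variable {k : Type*} [Field k] {n d₀ d₁ d₂ : ℕ}

lemma sumElim_eq_zero_iff {α β γ : Type*} [Zero γ] (f : α → γ) (g : β → γ) :
    Sum.elim f g = 0 ↔ f = 0 ∧ g = 0 := by
  constructor
  · intro h
    exact ⟨funext fun x => congrFun h (Sum.inl x), funext fun x => congrFun h (Sum.inr x)⟩
  · rintro ⟨rfl, rfl⟩; exact Sum.elim_zero_zero

lemma blockM_mulVec (A : Fin n → Matrix (Fin d₂) (Fin d₁) k)
    (B : Fin n → Matrix (Fin d₂) (Fin d₀) k)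
    (C : Fin n → Matrix (Fin d₁) (Fin d₀) k) (i : Fin n)
    (x₂ : Fin d₂ → k) (x₁ : Fin d₁ → k) (x₀ : Fin d₀ → k) :
    (blockM A B C i) *ᵥ (Sum.elim x₂ (Sum.elim x₁ x₀)) =
      Sum.elim (A i *ᵥ x₁ + B i *ᵥ x₀) (Sum.elim (C i *ᵥ x₀) 0) := by
  unfold blockM
  rw [Matrix.fromBlocks_mulVec]
  simp [Matrix.fromBlocks_mulVec, Matrix.zero_mulVec, Sum.elim_comp_inl, Sum.elim_comp_inr]

omit [Field k] in
lemma decompose (x : Fin d₂ ⊕ (Fin d₁ ⊕ Fin d₀) → k) :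
    x = Sum.elim (x ∘ Sum.inl)
      (Sum.elim (x ∘ Sum.inr ∘ Sum.inl) (x ∘ Sum.inr ∘ Sum.inr)) := by
  funext y; rcases y with y | (y | y) <;> rfl

lemma mem_socle_iff (A : Fin n → Matrix (Fin d₂) (Fin d₁) k)
    (B : Fin n → Matrix (Fin d₂) (Fin d₀) k)
    (C : Fin n → Matrix (Fin d₁) (Fin d₀) k) (x : Fin d₂ ⊕ (Fin d₁ ⊕ Fin d₀) → k) :
    x ∈ (⨅ i, LinearMap.ker (Matrix.mulVecLin (blockM A B C i))) ↔
      ∀ i, A i *ᵥ (x ∘ Sum.inr ∘ Sum.inl) + B i *ᵥ (x ∘ Sum.inr ∘ Sum.inr) = 0 ∧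
           C i *ᵥ (x ∘ Sum.inr ∘ Sum.inr) = 0 := by
  have key : ∀ i, (blockM A B C i) *ᵥ x =
      Sum.elim (A i *ᵥ (x ∘ Sum.inr ∘ Sum.inl) + B i *ᵥ (x ∘ Sum.inr ∘ Sum.inr))
        (Sum.elim (C i *ᵥ (x ∘ Sum.inr ∘ Sum.inr)) 0) := by
    intro i
    conv_lhs => rw [decompose x]
    exact blockM_mulVec A B C i _ _ _
  simp only [Submodule.mem_iInf, LinearMap.mem_ker, Matrix.mulVecLin_apply, key,
    sumElim_eq_zero_iff, and_true]

lemma mem_socle2_iff (A : Fin n → Matrix (Fin d₂) (Fin d₁) k)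
    (B : Fin n → Matrix (Fin d₂) (Fin d₀) k)
    (C : Fin n → Matrix (Fin d₁) (Fin d₀) k) (x : Fin d₂ ⊕ (Fin d₁ ⊕ Fin d₀) → k) :
    x ∈ (⨅ p : Fin n × Fin n,
        LinearMap.ker (Matrix.mulVecLin (blockM A B C p.1 * blockM A B C p.2))) ↔
      ∀ i j, A i *ᵥ (C j *ᵥ (x ∘ Sum.inr ∘ Sum.inr)) = 0 := by
  have key : ∀ i j : Fin n, (blockM A B C i * blockM A B C j) *ᵥ x =
      Sum.elim (A i *ᵥ (C j *ᵥ (x ∘ Sum.inr ∘ Sum.inr)))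
        (Sum.elim (0 : Fin d₁ → k) (0 : Fin d₀ → k)) := by
    intro i j
    rw [← Matrix.mulVec_mulVec]
    conv_lhs => rw [decompose x]
    rw [blockM_mulVec]
    have : Sum.elim (A j *ᵥ (x ∘ Sum.inr ∘ Sum.inl) + B j *ᵥ (x ∘ Sum.inr ∘ Sum.inr))
        (Sum.elim (C j *ᵥ (x ∘ Sum.inr ∘ Sum.inr)) 0) =
        Sum.elim (A j *ᵥ (x ∘ Sum.inr ∘ Sum.inl) + B j *ᵥ (x ∘ Sum.inr ∘ Sum.inr))
        (Sum.elim (C j *ᵥ (x ∘ Sum.inr ∘ Sum.inr)) (0 : Fin d₀ → k)) := rfl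
    rw [this, blockM_mulVec, Matrix.mulVec_zero, Matrix.mulVec_zero, add_zero]
  simp only [Submodule.mem_iInf, LinearMap.mem_ker, Matrix.mulVecLin_apply, Prod.forall, key,
    sumElim_eq_zero_iff, and_true]

/-- the embedding `(u, w) ↦ (u, w, 0)`. -/
def emb2 (k : Type*) [Field k] (d₀ d₁ d₂ : ℕ) :
    ((Fin d₂ → k) × (Fin d₁ → k)) →ₗ[k] (Fin d₂ ⊕ (Fin d₁ ⊕ Fin d₀) → k) where
  toFun p := Sum.elim p.1 (Sum.elim p.2 0)
  map_add' p q := by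
    funext y; rcases y with y | (y | y) <;> simp
  map_smul' c p := by
    funext y; rcases y with y | (y | y) <;> simp

lemma emb2_injective : Function.Injective (emb2 k d₀ d₁ d₂) := by
  intro p q h
  have h1 := congrArg (fun f => f ∘ Sum.inl) h
  have h2 := congrArg (fun f => f ∘ Sum.inr ∘ Sum.inl) h
  ext y
  · exact congrFun h1 y
  · exact congrFun h2 y

end Helpers
section Part1

variable {k : Type*} [Field k] {n a : ℕ}

lemma finrank_iInf_ker_ge
    (A : Fin n → Matrix (Fin (a-1)) (Fin (n*(a-1)+1)) k) :
    1 ≤ Module.finrank k ↥(⨅ i, LinearMap.ker (Matrix.mulVecLin (A i))) := by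
  have hker : (⨅ i, LinearMap.ker (Matrix.mulVecLin (A i))) =
      LinearMap.ker (LinearMap.pi fun i => Matrix.mulVecLin (A i)) :=
    (LinearMap.ker_pi _).symm
  rw [hker]
  have h1 := LinearMap.finrank_range_add_finrank_ker
    (LinearMap.pi fun i => Matrix.mulVecLin (A i))
  have h2 : Module.finrank k (Fin (n*(a-1)+1) → k) = n*(a-1)+1 := by
    simp [Module.finrank_pi]
  have h3 : Module.finrank k (Fin n → Fin (a-1) → k) = n*(a-1) := by
    simp [Module.finrank_pi_fintype, Module.finrank_pi, Finset.sum_const]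
  have h4 : Module.finrank k
      ↥(LinearMap.range (LinearMap.pi fun i => Matrix.mulVecLin (A i))) ≤ n*(a-1) :=
    le_trans (Submodule.finrank_le _) (le_of_eq h3)
  omega

lemma part1_bounds (ha : 1 ≤ a)
    (A : Fin n → Matrix (Fin (a-1)) (Fin (n*(a-1)+1)) k)
    (B : Fin n → Matrix (Fin (a-1)) (Fin ((n^2-1)*(a-1))) k)
    (C : Fin n → Matrix (Fin (n*(a-1)+1)) (Fin ((n^2-1)*(a-1))) k) :
    a ≤ Module.finrank k
        ↥(⨅ i, LinearMap.ker (Matrix.mulVecLin (blockM A B C i))) ∧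
    a + n * (a - 1) ≤ Module.finrank k
        ↥(⨅ p : Fin n × Fin n,
          LinearMap.ker (Matrix.mulVecLin (blockM A B C p.1 * blockM A B C p.2))) := by
  set K := ⨅ i, LinearMap.ker (Matrix.mulVecLin (A i)) with hKdef
  have hK : 1 ≤ Module.finrank k ↥K := finrank_iInf_ker_ge A
  constructor
  · set E := (emb2 k ((n^2-1)*(a-1)) (n*(a-1)+1) (a-1)).comp
      ((LinearMap.id (R := k) (M := Fin (a-1) → k)).prodMap K.subtype) with hE
    have hinj : Function.Injective E := by
      apply Function.Injective.comp emb2_injective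
      exact Function.Injective.prodMap (fun x y h => h) K.injective_subtype
    have hle : LinearMap.range E ≤
        ⨅ i, LinearMap.ker (Matrix.mulVecLin (blockM A B C i)) := by
      rintro x ⟨⟨u, v⟩, rfl⟩
      rw [mem_socle_iff]
      intro i
      have hv : Matrix.mulVecLin (A i) (v : Fin (n*(a-1)+1) → k) = 0 :=
        (Submodule.mem_iInf _).1 v.2 i
      constructor
      · show A i *ᵥ (v : _) + B i *ᵥ (0 : Fin ((n^2-1)*(a-1)) → k) = 0
        rw [Matrix.mulVec_zero, add_zero]
        exact hv
      · show C i *ᵥ (0 : Fin ((n^2-1)*(a-1)) → k) = 0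
        exact Matrix.mulVec_zero _
    have hfr : Module.finrank k ↥(LinearMap.range E) = (a-1) + Module.finrank k ↥K := by
      rw [LinearMap.finrank_range_of_inj hinj, Module.finrank_prod]
      simp [Module.finrank_pi]
    calc a ≤ (a-1) + Module.finrank k ↥K := by omega
    _ = Module.finrank k ↥(LinearMap.range E) := hfr.symm
    _ ≤ _ := Submodule.finrank_mono hle
  · set E := emb2 k ((n^2-1)*(a-1)) (n*(a-1)+1) (a-1) with hE
    have hle : LinearMap.range E ≤
        ⨅ p : Fin n × Fin n,
          LinearMap.ker (Matrix.mulVecLin (blockM A B C p.1 * blockM A B C p.2)) := by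
      rintro x ⟨⟨u, v⟩, rfl⟩
      rw [mem_socle2_iff]
      intro i j
      show A i *ᵥ (C j *ᵥ (0 : Fin ((n^2-1)*(a-1)) → k)) = 0
      rw [Matrix.mulVec_zero, Matrix.mulVec_zero]
    have hfr : Module.finrank k ↥(LinearMap.range E) = (a-1) + (n*(a-1)+1) := by
      rw [LinearMap.finrank_range_of_inj emb2_injective, Module.finrank_prod]
      simp [Module.finrank_pi]
    calc a + n*(a-1) ≤ (a-1) + (n*(a-1)+1) := by omega
    _ = Module.finrank k ↥(LinearMap.range E) := hfr.symm
    _ ≤ _ := Submodule.finrank_mono hle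

end Part1
section Part2

variable {k : Type*} [Field k] {n a : ℕ}

/-- encoding of `Fin (n^2-1)` into pairs, missing `(n-1, n-1)`. -/
def iot {n : ℕ} (hn : 2 ≤ n) (r : Fin (n^2-1)) : Fin n × Fin n :=
  (⟨(r:ℕ) / n, by
    have h2 : (n:ℕ)^2 = n*n := pow_two n
    have hr := r.2
    rw [Nat.div_lt_iff_lt_mul (by omega)]
    omega⟩,
   ⟨(r:ℕ) % n, Nat.mod_lt _ (by omega)⟩)

lemma iot_inj {n : ℕ} (hn : 2 ≤ n) : Function.Injective (iot hn) := by
  intro r r' h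
  have h1 : (r:ℕ)/n = (r':ℕ)/n := congrArg (fun p => ((p.1 : Fin n) : ℕ)) h
  have h2 : (r:ℕ)%n = (r':ℕ)%n := congrArg (fun p => ((p.2 : Fin n) : ℕ)) h
  have e : (r:ℕ) = (r':ℕ) := by
    rw [← Nat.div_add_mod (r:ℕ) n, ← Nat.div_add_mod (r':ℕ) n, h1, h2]
  exact Fin.ext e

lemma iot_ne {n : ℕ} (hn : 2 ≤ n) (r : Fin (n^2-1)) :
    iot hn r ≠ (⟨n-1, by omega⟩, ⟨n-1, by omega⟩) := by
  intro h
  have h1 : (r:ℕ)/n = n-1 := congrArg (fun p => ((p.1 : Fin n) : ℕ)) h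
  have h2 : (r:ℕ)%n = n-1 := congrArg (fun p => ((p.2 : Fin n) : ℕ)) h
  have e : (r:ℕ) = n*(n-1) + (n-1) := by
    rw [← Nat.div_add_mod (r:ℕ) n, h1, h2]
  have key : n*(n-1)+(n-1)+1 = n*n := by
    rcases n with _ | m
    · omega
    · simp only [Nat.succ_sub_one]; ring
  have h3 : (n:ℕ)^2 = n*n := pow_two n
  have hr := r.2
  omega

lemma q_lt {n : ℕ} (hn : 2 ≤ n) (q : Fin n) : (q:ℕ) < n^2-1 := by
  have h3 : (n:ℕ)^2 = n*n := pow_two n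
  have h4 : 2*n ≤ n*n := Nat.mul_le_mul_right n hn
  have := q.2
  omega

lemma rone_lt {n : ℕ} (hn : 2 ≤ n) : (n-1)*n < n^2-1 := by
  have h3 : (n:ℕ)^2 = n*n := pow_two n
  have key : (n-1)*n + n = n*n := by
    rcases n with _ | m
    · omega
    · simp only [Nat.succ_sub_one]; ring
  omega

lemma iot_q {n : ℕ} (hn : 2 ≤ n) (q : Fin n) :
    iot hn ⟨(q:ℕ), q_lt hn q⟩ = (⟨0, by omega⟩, q) := by
  unfold iot
  have h1 : (q:ℕ)/n = 0 := Nat.div_eq_of_lt q.2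
  have h2 : (q:ℕ)%n = q := Nat.mod_eq_of_lt q.2
  ext <;> simp [h1, h2]

lemma iot_rone {n : ℕ} (hn : 2 ≤ n) :
    iot hn ⟨(n-1)*n, rone_lt hn⟩ = (⟨n-1, by omega⟩, ⟨0, by omega⟩) := by
  unfold iot
  have h1 : ((n-1)*n)/n = n-1 := Nat.mul_div_cancel _ (by omega)
  have h2 : ((n-1)*n)%n = 0 := Nat.mul_mod_left _ _
  ext <;> simp [h1, h2]

variable (k) in
/-- the abstract `A` matrices. -/
def Amat (n a : ℕ) (i : Fin n) :
    Matrix (Fin (a-1)) ((Fin n × Fin (a-1)) ⊕ Fin 1) k :=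
  Matrix.of fun s y => Sum.elim
    (fun p : Fin n × Fin (a-1) => if p.1 = i ∧ p.2 = s then (1:k) else 0)
    (fun _ => 0) y

variable (k) in
/-- the abstract `C` matrices. -/
def Cmat (hn : 2 ≤ n) (ha : 2 ≤ a) (j : Fin n) :
    Matrix ((Fin n × Fin (a-1)) ⊕ Fin 1) (Fin (n^2-1) × Fin (a-1)) k :=
  Matrix.of fun y x => Sum.elim
    (fun q : Fin n × Fin (a-1) =>
      if q.2 = x.2 then
        (if iot hn x.1 = (j, q.1) then (1:k) else 0) -
        (if j = ⟨n-1, by omega⟩ ∧ q.1 = ⟨n-1, by omega⟩ ∧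
            (iot hn x.1).1 = (iot hn x.1).2 then 1 else 0)
      else 0)
    (fun _ => if j = ⟨n-1, by omega⟩ ∧
        iot hn x.1 = (⟨n-1, by omega⟩, ⟨0, by omega⟩) ∧ x.2 = ⟨0, by omega⟩
      then (1:k) else 0) y

lemma Amat_mulVec (i : Fin n) (w : (Fin n × Fin (a-1)) ⊕ Fin 1 → k) :
    (Amat k n a i) *ᵥ w = fun s => w (Sum.inl (i, s)) := by
  funext s
  simp only [Matrix.mulVec, dotProduct, Amat, Matrix.of_apply, Fintype.sum_sum_type,
    Fintype.sum_prod_type, Sum.elim_inl, Sum.elim_inr, zero_mul, Finset.sum_const_zero,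
    add_zero, ite_mul, one_mul, ite_and]
  rw [Finset.sum_eq_single i]
  · simp [Finset.sum_ite_eq']
  · intro b _ hb
    simp [hb]
  · simp

end Part2
section Part2b

variable {k : Type*} [Field k] {n a : ℕ}

lemma Cmat_mulVec_inl (hn : 2 ≤ n) (ha : 2 ≤ a) (j i : Fin n) (s : Fin (a-1))
    (w : Fin (n^2-1) × Fin (a-1) → k) :
    ((Cmat k hn ha j) *ᵥ w) (Sum.inl (i, s)) =
      ∑ r : Fin (n^2-1),
        ((if iot hn r = (j, i) then (1:k) else 0) -
         (if j = ⟨n-1, by omega⟩ ∧ i = ⟨n-1, by omega⟩ ∧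
            (iot hn r).1 = (iot hn r).2 then 1 else 0)) * w (r, s) := by
  simp only [Matrix.mulVec, dotProduct, Cmat, Matrix.of_apply, Sum.elim_inl,
    Fintype.sum_prod_type, ite_mul, zero_mul]
  rw [Finset.sum_comm]
  rw [Finset.sum_eq_single s]
  · simp
  · intro b _ hb
    apply Finset.sum_eq_zero
    intro r _
    simp [Ne.symm hb]
  · simp

lemma Cmat_mulVec_inr (hn : 2 ≤ n) (ha : 2 ≤ a) (j : Fin n) (u : Fin 1)
    (w : Fin (n^2-1) × Fin (a-1) → k) :
    ((Cmat k hn ha j) *ᵥ w) (Sum.inr u) =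
      if j = ⟨n-1, by omega⟩ then
        w (⟨(n-1)*n, rone_lt hn⟩, ⟨0, by omega⟩) else 0 := by
  have hiota : ∀ r : Fin (n^2-1),
      (iot hn r = ((⟨n-1, by omega⟩ : Fin n), (⟨0, by omega⟩ : Fin n))) =
      (r = ⟨(n-1)*n, rone_lt hn⟩) := by
    intro r
    apply propext
    constructor
    · intro h
      exact iot_inj hn (h.trans (iot_rone hn).symm)
    · rintro rfl
      exact iot_rone hn
  simp only [Matrix.mulVec, dotProduct, Cmat, Matrix.of_apply, Sum.elim_inr,
    Fintype.sum_prod_type, ite_mul, one_mul, zero_mul, hiota, ite_and]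
  by_cases hj : j = (⟨n-1, by omega⟩ : Fin n)
  · simp only [hj, if_pos rfl, if_true]
    rw [Finset.sum_eq_single (⟨(n-1)*n, rone_lt hn⟩ : Fin (n^2-1))]
    · simp [Finset.sum_ite_eq']
    · intro b _ hb
      simp [hb]
    · simp
  · simp [hj]

lemma sum_Amat_Cmat (hn : 2 ≤ n) (ha : 2 ≤ a) :
    (∑ i, Amat k n a i * Cmat k hn ha i) = 0 := by
  ext s x
  obtain ⟨r, t⟩ := x
  simp only [Finset.sum_apply, Matrix.sum_apply, Matrix.mul_apply, Matrix.zero_apply]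
  have hAC : ∀ i : Fin n, ∑ y, Amat k n a i s y * Cmat k hn ha i y (r, t) =
      Cmat k hn ha i (Sum.inl (i, s)) (r, t) := by
    intro i
    simp only [Amat, Matrix.of_apply, Fintype.sum_sum_type, Sum.elim_inl, Sum.elim_inr,
      zero_mul, Finset.sum_const_zero, add_zero, Fintype.sum_prod_type, ite_mul, one_mul,
      ite_and]
    rw [Finset.sum_eq_single i]
    · simp [Finset.sum_ite_eq']
    · intro b _ hb; simp [hb]
    · simp
  rw [Finset.sum_congr rfl (fun i _ => hAC i)]
  simp only [Cmat, Matrix.of_apply, Sum.elim_inl]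
  by_cases hst : s = t
  · simp only [if_pos hst]
    rw [Finset.sum_sub_distrib]
    have h1 : ∀ i : Fin n, (iot hn r = (i, i)) =
        (i = (iot hn r).1 ∧ (iot hn r).1 = (iot hn r).2) := by
      intro i
      apply propext
      constructor
      · intro h
        have e1 : (iot hn r).1 = i := congrArg Prod.fst h
        have e2 : (iot hn r).2 = i := congrArg Prod.snd h
        exact ⟨e1.symm, e1.trans e2.symm⟩
      · rintro ⟨rfl, h2⟩
        exact Prod.ext rfl h2.symm
    simp only [h1, ite_and]
    rw [Finset.sum_ite_eq' Finset.univ ((iot hn r).1)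
      (fun _ => if (iot hn r).1 = (iot hn r).2 then (1:k) else 0)]
    rw [Finset.sum_ite_eq' Finset.univ (⟨n-1, by omega⟩ : Fin n)
      (fun x => if x = ⟨n-1, by omega⟩ then
        (if (iot hn r).1 = (iot hn r).2 then (1:k) else 0) else 0)]
    simp
  · simp [hst]

end Part2b
section Part2c

variable {k : Type*} [Field k] {n a : ℕ}

lemma joint_inj (hn : 2 ≤ n) (ha : 2 ≤ a) (w : Fin (n^2-1) × Fin (a-1) → k)
    (h : ∀ i j : Fin n, Amat k n a i *ᵥ (Cmat k hn ha j *ᵥ w) = 0) : w = 0 := by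
  funext x
  obtain ⟨r, s⟩ := x
  have h' := h (iot hn r).2 (iot hn r).1
  rw [Amat_mulVec] at h'
  have h2 : (Cmat k hn ha (iot hn r).1 *ᵥ w) (Sum.inl ((iot hn r).2, s)) = 0 :=
    congrFun h' s
  rw [Cmat_mulVec_inl] at h2
  have hcond : ∀ r' : Fin (n^2-1),
      (iot hn r' = ((iot hn r).1, (iot hn r).2)) = (r' = r) := by
    intro r'
    apply propext
    constructor
    · intro hh
      exact iot_inj hn (hh.trans (Prod.mk.eta))
    · rintro rfl
      exact Prod.mk.eta.symm
  have hlast : ∀ P : Prop, ((iot hn r).1 = (⟨n-1, by omega⟩ : Fin n) ∧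
      ((iot hn r).2 = (⟨n-1, by omega⟩ : Fin n) ∧ P)) = False := by
    intro P
    apply propext
    simp only [iff_false]
    rintro ⟨hh1, hh2, -⟩
    exact iot_ne hn r (Prod.ext hh1 hh2)
  simp only [hcond, hlast, if_false, sub_zero, ite_mul, one_mul, zero_mul,
    Finset.sum_ite_eq'] at h2
  simpa using h2

lemma zero_ne_last {n : ℕ} (hn : 2 ≤ n) :
    (⟨0, by omega⟩ : Fin n) ≠ (⟨n-1, by omega⟩ : Fin n) := by
  intro h
  have := congrArg Fin.val h
  simp at this
  omega

lemma Cmat_col_q (hn : 2 ≤ n) (ha : 2 ≤ a) (q : Fin n) (s : Fin (a-1)) :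
    (Cmat k hn ha ⟨0, by omega⟩) *ᵥ (Pi.single (⟨(q:ℕ), q_lt hn q⟩, s) 1) =
      Pi.single (Sum.inl (q, s)) 1 := by
  rw [Matrix.mulVec_single_one]
  funext y
  rcases y with ⟨i, t⟩ | u
  · simp only [Matrix.transpose_apply, Cmat, Matrix.of_apply, Sum.elim_inl,
      iot_q hn q, Pi.single_apply, Sum.inl.injEq, Prod.mk.injEq]
    have hne : ¬((⟨0, by omega⟩ : Fin n) = (⟨n-1, by omega⟩ : Fin n)) := zero_ne_last hn
    have hqi : ((((⟨0, by omega⟩ : Fin n), q) : Fin n × Fin n) =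
        (((⟨0, by omega⟩ : Fin n), i) : Fin n × Fin n)) = (i = q) := by
      apply propext
      constructor
      · intro hh
        exact (congrArg Prod.snd hh).symm
      · rintro rfl
        rfl
    simp only [hne, false_and, if_false, sub_zero, hqi]
    by_cases h1 : t = s <;> by_cases h2 : i = q <;> simp [h1, h2, iot_q hn q] <;>
      exact fun hh => h2 hh.symm
  · simp only [Matrix.transpose_apply, Cmat, Matrix.of_apply, Sum.elim_inr,
      iot_q hn q, Pi.single_apply]
    have hne : ¬((⟨0, by omega⟩ : Fin n) = (⟨n-1, by omega⟩ : Fin n)) := zero_ne_last hn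
    simp [hne]

lemma Cmat_col_z (hn : 2 ≤ n) (ha : 2 ≤ a) :
    (Cmat k hn ha ⟨n-1, by omega⟩) *ᵥ
        (Pi.single (⟨(n-1)*n, rone_lt hn⟩, (⟨0, by omega⟩ : Fin (a-1))) 1) =
      Pi.single (Sum.inl ((⟨0, by omega⟩ : Fin n), (⟨0, by omega⟩ : Fin (a-1)))) 1 +
        Pi.single (Sum.inr (0 : Fin 1)) 1 := by
  rw [Matrix.mulVec_single_one]
  funext y
  rcases y with ⟨i, t⟩ | u
  · simp only [Matrix.transpose_apply, Cmat, Matrix.of_apply, Sum.elim_inl,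
      iot_rone hn, Pi.add_apply, Pi.single_apply]
    have hd : ¬((⟨n-1, by omega⟩ : Fin n) = (⟨0, by omega⟩ : Fin n)) :=
      Ne.symm (zero_ne_last hn)
    have hqi : ((((⟨n-1, by omega⟩ : Fin n), (⟨0, by omega⟩ : Fin n)) : Fin n × Fin n) =
        (((⟨n-1, by omega⟩ : Fin n), i) : Fin n × Fin n)) = (i = (⟨0, by omega⟩ : Fin n)) := by
      apply propext
      constructor
      · intro hh
        exact (congrArg Prod.snd hh).symm
      · rintro rfl
        rfl
    simp only [hqi, hd, and_false, false_and, if_false, sub_zero, reduceCtorEq]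
    by_cases h1 : t = (⟨0, by omega⟩ : Fin (a-1)) <;>
      by_cases h2 : i = (⟨0, by omega⟩ : Fin n) <;> simp [h1, h2, iot_rone hn, show n - 1 ≠ 0 by omega] <;>
      exact fun hh => h2 hh.symm
  · simp only [Matrix.transpose_apply, Cmat, Matrix.of_apply, Sum.elim_inr,
      iot_rone hn, Pi.add_apply, Pi.single_apply]
    have hu : u = 0 := Subsingleton.elim _ _
    simp [hu, iot_rone hn]

lemma Amat_eval_v (i : Fin n) :
    Amat k n a i *ᵥ (Sum.elim (0 : Fin n × Fin (a-1) → k) (fun _ => (1:k))) = 0 := by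
  rw [Amat_mulVec]
  funext s
  simp

lemma Amat_surj (i : Fin n) (t : Fin (a-1) → k) :
    Amat k n a i *ᵥ (Sum.elim (fun p : Fin n × Fin (a-1) =>
      if p.1 = i then t p.2 else 0) (0 : Fin 1 → k)) = t := by
  rw [Amat_mulVec]
  funext s
  simp

end Part2c
section Part2d

variable {k : Type*} [Field k] {n a : ℕ}

/-- index equivalence for the middle layer. -/
def e1N (n a : ℕ) : Fin (n*(a-1)+1) ≃ (Fin n × Fin (a-1)) ⊕ Fin 1 :=
  finSumFinEquiv.symm.trans (Equiv.sumCongr finProdFinEquiv.symm (Equiv.refl (Fin 1)))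

/-- index equivalence for the top layer. -/
def e0N (n a : ℕ) : Fin ((n^2-1)*(a-1)) ≃ Fin (n^2-1) × Fin (a-1) :=
  finProdFinEquiv.symm

variable (k) in
/-- the transported `A` matrices. -/
def Abig (n a : ℕ) (i : Fin n) : Matrix (Fin (a-1)) (Fin (n*(a-1)+1)) k :=
  (Amat k n a i).submatrix (_root_.id) ⇑(e1N n a)

variable (k) in
/-- the transported `C` matrices. -/
def Cbig (hn : 2 ≤ n) (ha : 2 ≤ a) (j : Fin n) :
    Matrix (Fin (n*(a-1)+1)) (Fin ((n^2-1)*(a-1))) k :=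
  (Cmat k hn ha j).submatrix ⇑(e1N n a) ⇑(e0N n a)

lemma Abig_mulVec (i : Fin n) (v : Fin (n*(a-1)+1) → k) :
    Abig k n a i *ᵥ v = Amat k n a i *ᵥ (v ∘ ⇑(e1N n a).symm) := by
  rw [Abig, Matrix.submatrix_mulVec_equiv]
  rfl

lemma Cbig_mulVec (hn : 2 ≤ n) (ha : 2 ≤ a) (j : Fin n) (w : Fin ((n^2-1)*(a-1)) → k) :
    Cbig k hn ha j *ᵥ w = (Cmat k hn ha j *ᵥ (w ∘ ⇑(e0N n a).symm)) ∘ ⇑(e1N n a) :=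
  Matrix.submatrix_mulVec_equiv _ _ _ _

lemma single_comp_equiv {α β : Type*} [DecidableEq α] [DecidableEq β]
    (e : α ≃ β) (b : β) :
    (Pi.single b (1:k)) ∘ ⇑e = Pi.single (e.symm b) (1:k) := by
  funext y
  simp only [Function.comp_apply, Pi.single_apply]
  rw [if_congr (Equiv.apply_eq_iff_eq_symm_apply e) rfl rfl]

lemma comp_e_comp_symm {α β : Type*} (e : α ≃ β) (f : β → k) :
    (f ∘ ⇑e) ∘ ⇑e.symm = f := by
  funext z
  simp

lemma Cbig_joint_inj (hn : 2 ≤ n) (ha : 2 ≤ a) (x₀ : Fin ((n^2-1)*(a-1)) → k)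
    (h : ∀ i j : Fin n, Abig k n a i *ᵥ (Cbig k hn ha j *ᵥ x₀) = 0) : x₀ = 0 := by
  have key : ∀ i j : Fin n,
      Amat k n a i *ᵥ (Cmat k hn ha j *ᵥ (x₀ ∘ ⇑(e0N n a).symm)) = 0 := by
    intro i j
    have h2 := h i j
    rw [Abig_mulVec, Cbig_mulVec hn ha, comp_e_comp_symm] at h2
    exact h2
  have := joint_inj hn ha _ key
  funext z
  have h3 := congrFun this ((e0N n a) z)
  simpa using h3

lemma stratum_big (hn : 2 ≤ n) (ha : 2 ≤ a) :
    IsStratumDatum k (Abig k n a) (Cbig k hn ha) := by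
  refine ⟨?_, ?_, ?_⟩
  · -- ∑ Aᵢ Cᵢ = 0
    have h1 : ∀ i : Fin n, Abig k n a i * Cbig k hn ha i =
        (Amat k n a i * Cmat k hn ha i).submatrix (_root_.id) ⇑(e0N n a) := fun i =>
      Matrix.submatrix_mul_equiv (Amat k n a i) (Cmat k hn ha i) (_root_.id) (e1N n a) _
    rw [Finset.sum_congr rfl (fun i _ => h1 i)]
    ext s x
    rw [Matrix.sum_apply]
    simp only [Matrix.submatrix_apply, id_eq]
    have h2 : (∑ i : Fin n, (Amat k n a i * Cmat k hn ha i)) s ((e0N n a) x) = 0 := by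
      rw [sum_Amat_Cmat hn ha]
      rfl
    rw [Matrix.sum_apply] at h2
    rw [h2]
    rfl
  · -- spanning of middle layer
    rw [eq_top_iff]
    intro x _
    have hx : x = ∑ y : Fin (n*(a-1)+1), (x y) • (Pi.single y (1:k) : Fin (n*(a-1)+1) → k) := by
      refine ((Finset.univ_sum_single x).symm).trans ?_
      refine Finset.sum_congr rfl fun y _ => ?_
      rw [← Pi.single_smul, smul_eq_mul, mul_one]
    rw [hx]
    apply Submodule.sum_mem
    intro y _
    apply Submodule.smul_mem
    clear hx
    have hkey : ∀ (q : Fin n) (s : Fin (a-1)),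
        Pi.single ((e1N n a).symm (Sum.inl (q, s))) (1:k) ∈
          ⨆ i, LinearMap.range (Matrix.mulVecLin (Cbig k hn ha i)) := by
      intro q s
      apply Submodule.mem_iSup_of_mem (⟨0, by omega⟩ : Fin n)
      refine ⟨Pi.single (⟨(q:ℕ), q_lt hn q⟩, s) 1 ∘ ⇑(e0N n a), ?_⟩
      rw [Matrix.mulVecLin_apply, Cbig_mulVec hn ha, comp_e_comp_symm,
        Cmat_col_q hn ha q s, single_comp_equiv]
    rcases hcase : (e1N n a) y with p | u
    · obtain ⟨q, s⟩ := p
      have hy : y = (e1N n a).symm (Sum.inl (q, s)) := by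
        rw [← hcase]
        simp
      rw [hy]
      exact hkey q s
    · have hy : y = (e1N n a).symm (Sum.inr (0 : Fin 1)) := by
        rw [Subsingleton.elim (0 : Fin 1) u, ← hcase]
        simp
      have hmem1 : Matrix.mulVecLin (Cbig k hn ha ⟨n-1, by omega⟩)
          (Pi.single (⟨(n-1)*n, rone_lt hn⟩, (⟨0, by omega⟩ : Fin (a-1))) 1 ∘ ⇑(e0N n a)) ∈
          ⨆ i, LinearMap.range (Matrix.mulVecLin (Cbig k hn ha i)) :=
        Submodule.mem_iSup_of_mem _ ⟨_, rfl⟩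
      have heq : Pi.single ((e1N n a).symm (Sum.inr (0 : Fin 1))) (1:k) =
          Matrix.mulVecLin (Cbig k hn ha ⟨n-1, by omega⟩)
            (Pi.single (⟨(n-1)*n, rone_lt hn⟩, (⟨0, by omega⟩ : Fin (a-1))) 1 ∘ ⇑(e0N n a)) -
          Pi.single ((e1N n a).symm
            (Sum.inl ((⟨0, by omega⟩ : Fin n), (⟨0, by omega⟩ : Fin (a-1))))) (1:k) := by
        rw [Matrix.mulVecLin_apply, Cbig_mulVec hn ha, comp_e_comp_symm, Cmat_col_z hn ha]
        have hdist : (Pi.single (Sum.inl ((⟨0, by omega⟩ : Fin n), (⟨0, by omega⟩ : Fin (a-1)))) (1:k) +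
            Pi.single (Sum.inr (0 : Fin 1)) (1:k)) ∘ ⇑(e1N n a) =
            (Pi.single (Sum.inl ((⟨0, by omega⟩ : Fin n), (⟨0, by omega⟩ : Fin (a-1)))) (1:k)) ∘ ⇑(e1N n a) +
            (Pi.single (Sum.inr (0 : Fin 1)) (1:k)) ∘ ⇑(e1N n a) := rfl
        rw [hdist, single_comp_equiv, single_comp_equiv]
        abel
      rw [hy, heq]
      exact Submodule.sub_mem _ hmem1 (hkey _ _)
  · -- spanning of bottom layer
    rw [eq_top_iff]
    intro t _
    apply Submodule.mem_iSup_of_mem (⟨0, by omega⟩ : Fin n)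
    refine ⟨(Sum.elim (fun p : Fin n × Fin (a-1) =>
      if p.1 = ⟨0, by omega⟩ then t p.2 else 0) (0 : Fin 1 → k)) ∘ ⇑(e1N n a), ?_⟩
    rw [Matrix.mulVecLin_apply, Abig_mulVec, comp_e_comp_symm]
    exact Amat_surj _ t

end Part2d
section Part2e

variable {k : Type*} [Field k] {n a : ℕ}

lemma socle_big (hn : 2 ≤ n) (ha : 2 ≤ a) :
    Module.finrank k
      ↥(⨅ i, LinearMap.ker (Matrix.mulVecLin
        (blockM (Abig k n a)
          (fun _ => (0 : Matrix (Fin (a-1)) (Fin ((n^2-1)*(a-1))) k))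
          (Cbig k hn ha) i))) = a := by
  classical
  set v : Fin (n*(a-1)+1) → k :=
    (Sum.elim (0 : Fin n × Fin (a-1) → k) (fun _ => (1:k))) ∘ ⇑(e1N n a) with hv
  have hvsymm : v ∘ ⇑(e1N n a).symm =
      Sum.elim (0 : Fin n × Fin (a-1) → k) (fun _ => (1:k)) := by
    funext z
    simp [hv]
  have hvne : v ≠ 0 := by
    intro h
    have h1 := congrFun h ((e1N n a).symm (Sum.inr (0 : Fin 1)))
    rw [hv] at h1
    simp at h1
  have hAv : ∀ i, Abig k n a i *ᵥ v = 0 := by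
    intro i
    rw [Abig_mulVec, hvsymm]
    exact Amat_eval_v i
  have hker : ∀ x₁ : Fin (n*(a-1)+1) → k, (∀ i, Abig k n a i *ᵥ x₁ = 0) →
      x₁ ∈ Submodule.span k {v} := by
    intro x₁ h
    have hw : ∀ p : Fin n × Fin (a-1), (x₁ ∘ ⇑(e1N n a).symm) (Sum.inl p) = 0 := by
      intro p
      have h2 := h p.1
      rw [Abig_mulVec, Amat_mulVec] at h2
      have h3 := congrFun h2 p.2
      simpa using h3
    refine Submodule.mem_span_singleton.2 ⟨x₁ ((e1N n a).symm (Sum.inr (0 : Fin 1))), ?_⟩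
    funext y
    have hxy : x₁ y = (x₁ ∘ ⇑(e1N n a).symm) ((e1N n a) y) := by simp
    rcases hcase : (e1N n a) y with p | u
    · have h0 : x₁ y = 0 := by
        rw [hxy, hcase]
        exact hw p
      have hv0 : v y = 0 := by
        rw [hv]
        simp [hcase]
      simp [h0, hv0]
    · have h0 : x₁ y = x₁ ((e1N n a).symm (Sum.inr (0 : Fin 1))) := by
        rw [hxy, hcase, Subsingleton.elim u (0 : Fin 1)]
        simp
      have hv1 : v y = 1 := by
        rw [hv]
        simp [hcase]
      simp [h0, hv1]
  set K := Submodule.span k {v} with hK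
  set E := (emb2 k ((n^2-1)*(a-1)) (n*(a-1)+1) (a-1)).comp
      ((LinearMap.id (R := k) (M := Fin (a-1) → k)).prodMap K.subtype) with hE
  have hrange : (⨅ i, LinearMap.ker (Matrix.mulVecLin
      (blockM (Abig k n a)
        (fun _ => (0 : Matrix (Fin (a-1)) (Fin ((n^2-1)*(a-1))) k))
        (Cbig k hn ha) i))) = LinearMap.range E := by
    apply le_antisymm
    · intro x hx
      rw [mem_socle_iff] at hx
      have hx0 : (x ∘ Sum.inr ∘ Sum.inr) = 0 := by
        apply Cbig_joint_inj hn ha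
        intro i j
        rw [(hx j).2, Matrix.mulVec_zero]
      have hx1 : (x ∘ Sum.inr ∘ Sum.inl) ∈ K := by
        apply hker
        intro i
        have h2 := (hx i).1
        rwa [Matrix.zero_mulVec, add_zero] at h2
      exact ⟨(x ∘ Sum.inl, ⟨_, hx1⟩), by
        funext y
        rcases y with y | (y | y)
        · rfl
        · rfl
        · exact (congrFun hx0 y).symm⟩
    · rintro x ⟨⟨u, w⟩, rfl⟩
      rw [mem_socle_iff]
      intro i
      obtain ⟨c, hc⟩ := Submodule.mem_span_singleton.1 w.2
      constructor
      · show Abig k n a i *ᵥ (w : Fin (n*(a-1)+1) → k) +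
          (0 : Matrix (Fin (a-1)) (Fin ((n^2-1)*(a-1))) k) *ᵥ
            (0 : Fin ((n^2-1)*(a-1)) → k) = 0
        rw [Matrix.zero_mulVec, add_zero, ← hc, Matrix.mulVec_smul, hAv i, smul_zero]
      · show Cbig k hn ha i *ᵥ (0 : Fin ((n^2-1)*(a-1)) → k) = 0
        exact Matrix.mulVec_zero _
  rw [hrange]
  have hinj : Function.Injective E := by
    apply Function.Injective.comp emb2_injective
    exact Function.Injective.prodMap (fun x y h => h) K.injective_subtype
  rw [LinearMap.finrank_range_of_inj hinj, Module.finrank_prod, hK,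
    finrank_span_singleton hvne]
  simp only [Module.finrank_pi, Fintype.card_fin]
  omega

lemma socle2_big (hn : 2 ≤ n) (ha : 2 ≤ a) :
    Module.finrank k
      ↥(⨅ p : Fin n × Fin n, LinearMap.ker (Matrix.mulVecLin
        (blockM (Abig k n a)
          (fun _ => (0 : Matrix (Fin (a-1)) (Fin ((n^2-1)*(a-1))) k))
          (Cbig k hn ha) p.1 *
         blockM (Abig k n a)
          (fun _ => (0 : Matrix (Fin (a-1)) (Fin ((n^2-1)*(a-1))) k))
          (Cbig k hn ha) p.2))) = a + n * (a-1) := by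
  set E := emb2 k ((n^2-1)*(a-1)) (n*(a-1)+1) (a-1) with hE
  have hrange : (⨅ p : Fin n × Fin n, LinearMap.ker (Matrix.mulVecLin
      (blockM (Abig k n a)
        (fun _ => (0 : Matrix (Fin (a-1)) (Fin ((n^2-1)*(a-1))) k))
        (Cbig k hn ha) p.1 *
       blockM (Abig k n a)
        (fun _ => (0 : Matrix (Fin (a-1)) (Fin ((n^2-1)*(a-1))) k))
        (Cbig k hn ha) p.2))) = LinearMap.range E := by
    apply le_antisymm
    · intro x hx
      rw [mem_socle2_iff] at hx
      have hx0 : (x ∘ Sum.inr ∘ Sum.inr) = 0 := Cbig_joint_inj hn ha _ hx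
      exact ⟨(x ∘ Sum.inl, x ∘ Sum.inr ∘ Sum.inl), by
        funext y
        rcases y with y | (y | y)
        · rfl
        · rfl
        · exact (congrFun hx0 y).symm⟩
    · rintro x ⟨⟨u, w⟩, rfl⟩
      rw [mem_socle2_iff]
      intro i j
      show Abig k n a i *ᵥ (Cbig k hn ha j *ᵥ (0 : Fin ((n^2-1)*(a-1)) → k)) = 0
      rw [Matrix.mulVec_zero, Matrix.mulVec_zero]
  rw [hrange, LinearMap.finrank_range_of_inj emb2_injective, Module.finrank_prod]
  simp only [Module.finrank_pi, Fintype.card_fin]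
  omega

end Part2e

/-- The second exceptional case of Theorem 1.2 of the paper: for the radical
layering `((n²−1)(a−1), n(a−1)+1, a−1)`, every representation has socle of
dimension at least `a` and second socle of dimension at least `a + n(a−1)`,
and both bounds are attained simultaneously; i.e. the generic socle layering
is `(a, n(a−1), (n²−1)(a−1))`. -/
theorem stmt17 (k : Type*) [Field k] [IsAlgClosed k] (hk : ringChar k ≠ 2)
    (n : ℕ) (hn : 2 ≤ n) (a : ℕ) (ha : 2 ≤ a)
    (d₀ d₁ d₂ : ℕ) (hd₀ : d₀ = (n ^ 2 - 1) * (a - 1))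
    (hd₁ : d₁ = n * (a - 1) + 1) (hd₂ : d₂ = a - 1) :
    (∀ (A : Fin n → Matrix (Fin d₂) (Fin d₁) k)
       (B : Fin n → Matrix (Fin d₂) (Fin d₀) k)
       (C : Fin n → Matrix (Fin d₁) (Fin d₀) k), IsStratumDatum k A C →
        a ≤ Module.finrank k
            ↥(⨅ i, LinearMap.ker (Matrix.mulVecLin (blockM A B C i))) ∧
        a + n * (a - 1) ≤
          Module.finrank k
            ↥(⨅ p : Fin n × Fin n,
              LinearMap.ker
                (Matrix.mulVecLin (blockM A B C p.1 * blockM A B C p.2)))) ∧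
    (∃ (A : Fin n → Matrix (Fin d₂) (Fin d₁) k)
       (B : Fin n → Matrix (Fin d₂) (Fin d₀) k)
       (C : Fin n → Matrix (Fin d₁) (Fin d₀) k), IsStratumDatum k A C ∧
        Module.finrank k
            ↥(⨅ i, LinearMap.ker (Matrix.mulVecLin (blockM A B C i))) = a ∧
        Module.finrank k
            ↥(⨅ p : Fin n × Fin n,
              LinearMap.ker
                (Matrix.mulVecLin (blockM A B C p.1 * blockM A B C p.2))) =
          a + n * (a - 1)) := by
  subst hd₀ hd₁ hd₂
  constructor
  · intro A B C _
    exact part1_bounds (by omega) A B C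
  · exact ⟨Abig k n a, (fun _ => (0 : Matrix (Fin (a-1)) (Fin ((n^2-1)*(a-1))) k)),
      Cbig k hn ha, stratum_big hn ha, socle_big hn ha, socle2_big hn ha⟩
end
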